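/- Let a > 0 and let φ : [0,a] → ℝ be a strictly increasing, concave, continuous function with φ(0) = 0 and φ(a) = 1. Suppose f, g ∈ Λ(φ)[0,a], ‖f‖_{Λ(φ)} = 1, the set {t ∈ [0,a] : f(t) = 0} has Lebesgue measure zero, and ‖f + g‖_{Λ(φ)} ≤ 1 and ‖f − g‖_{Λ(φ)} ≤ 1. Then g = h·f for some measurable real-valued function h on [0,a] with |h(t)| ≤ 1 for a.e. t ∈ [0,a]. -/

import Mathlib

open MeasureTheory Set Filter Topology
open scoped ENNReal NNReal Classical

noncomputable section

/-- The distribution function `m {s ∈ [0,a] : τ < ‖f s‖}` of `f` on `[0,a]`. -/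
def distrib {E : Type*} [NormedAddCommGroup E] (a : ℝ) (f : ℝ → E) (τ : ℝ) : ℝ≥0∞ :=
  volume {s ∈ Set.Icc (0:ℝ) a | τ < ‖f s‖}

/-- The decreasing rearrangement `f*` of `f` on `[0,a]`:
`f*(t) = inf {τ ≥ 0 : m {s ∈ [0,a] : ‖f s‖ > τ} ≤ t}`. -/
def rearr {E : Type*} [NormedAddCommGroup E] (a : ℝ) (f : ℝ → E) (t : ℝ) : ℝ :=
  sInf {τ : ℝ | 0 ≤ τ ∧ distrib a f τ ≤ ENNReal.ofReal t}

/-- The clamp of `t : ℝ` to the interval `[0,a]`. -/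
def clampIcc (a t : ℝ) : ℝ := min (max t 0) a

lemma clampIcc_mem (a t : ℝ) (ha : 0 ≤ a) : clampIcc a t ∈ Set.Icc (0:ℝ) a :=
  ⟨le_min (le_max_right t 0) ha, min_le_right _ _⟩

lemma clampIcc_mono (a : ℝ) : Monotone (clampIcc a) := fun _ _ hst =>
  min_le_min (max_le_max hst le_rfl) le_rfl

lemma clampIcc_continuous (a : ℝ) : Continuous (clampIcc a) :=
  (continuous_id.max continuous_const).min continuous_const

/-- The Stieltjes integrator associated with an increasing continuous function `φ` on `[0,a]`
(extended to all of `ℝ` as a constant outside `[0,a]`).  Its Lebesgue–Stieltjes measure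
realizes the integrals `∫₀^a ⋯ dφ(t)`. -/
def stieltjesOfOn (φ : ℝ → ℝ) (a : ℝ) : StieltjesFunction ℝ :=
  if h : 0 ≤ a ∧ MonotoneOn φ (Set.Icc 0 a) ∧ ContinuousOn φ (Set.Icc 0 a) then
    { toFun := fun t => φ (clampIcc a t)
      mono' := fun s t hst =>
        h.2.1 (clampIcc_mem a s h.1) (clampIcc_mem a t h.1) (clampIcc_mono a hst)
      right_continuous' := fun t =>
        ((h.2.2.comp_continuous (clampIcc_continuous a)
          (fun x => clampIcc_mem a x h.1)).continuousAt).continuousWithinAt }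
  else StieltjesFunction.id

/-- The Lorentz space functional `‖f‖_{Λ(φ)} = ∫₀^a f*(t) dφ(t)` (with values in `ℝ≥0∞`). -/
def eLorentzNorm {E : Type*} [NormedAddCommGroup E] (φ : ℝ → ℝ) (a : ℝ) (f : ℝ → E) : ℝ≥0∞ :=
  ∫⁻ t in Set.Ioc (0:ℝ) a, ENNReal.ofReal (rearr a f t) ∂(stieltjesOfOn φ a).measure

/-- Membership in the Lorentz space `Λ(φ)[0,a]`. -/
def MemLorentz {E : Type*} [NormedAddCommGroup E] [MeasurableSpace E]
    (φ : ℝ → ℝ) (a : ℝ) (f : ℝ → E) : Prop :=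
  Measurable f ∧ eLorentzNorm φ a f < ⊤

/-- The Hardy–Lorentz space functional
`‖f‖_{H(Λ(φ))} = sup_{0 ≤ r < 1} ‖t ↦ f (r e^{it})‖_{Λ(φ)}` for functions on the unit disk. -/
def eHLNorm (φ : ℝ → ℝ) (f : ℂ → ℂ) : ℝ≥0∞ :=
  ⨆ r ∈ Set.Ico (0:ℝ) 1,
    eLorentzNorm φ (2 * Real.pi)
      (fun t : ℝ => f (Complex.ofReal r * Complex.exp (Complex.I * Complex.ofReal t)))

/-- The classical `H¹` functional `‖f‖_{H¹} = sup_{0 ≤ r < 1} (1/(2π)) ∫₀^{2π} |f(r e^{it})| dt`. -/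
def eH1Norm (f : ℂ → ℂ) : ℝ≥0∞ :=
  ⨆ r ∈ Set.Ico (0:ℝ) 1,
    (ENNReal.ofReal (2 * Real.pi))⁻¹ *
      ∫⁻ t in Set.Ioc (0:ℝ) (2 * Real.pi),
        ENNReal.ofReal ‖f (Complex.ofReal r * Complex.exp (Complex.I * Complex.ofReal t))‖

/-- `fb` is the boundary (radial limit) function of `f`: for a.e. `t ∈ [0,2π]`,
`f(r e^{it}) → fb t` as `r → 1⁻`.  (For `f ∈ H¹` such a function exists and coincides a.e.
with the nontangential limit `f̃`.) -/
def HasRadialLimits (f : ℂ → ℂ) (fb : ℝ → ℂ) : Prop :=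
  ∀ᵐ t ∂(volume.restrict (Set.Icc (0:ℝ) (2 * Real.pi))),
    Filter.Tendsto (fun r : ℝ => f (Complex.ofReal r * Complex.exp (Complex.I * Complex.ofReal t)))
      (nhdsWithin 1 (Set.Iio 1)) (nhds (fb t))

/-- `f` (with boundary function `fb`) is an outer function:
`f` is non-null and `ln |f 0| = (1/(2π)) ∫₀^{2π} ln |fb s| ds`. -/
def IsOuter (f : ℂ → ℂ) (fb : ℝ → ℂ) : Prop :=
  (∃ z ∈ Metric.ball (0:ℂ) 1, f z ≠ 0) ∧
    Real.log ‖f 0‖ =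
      (1 / (2 * Real.pi)) * ∫ s in Set.Ioc (0:ℝ) (2 * Real.pi), Real.log ‖fb s‖

/-- The set `E₊ = {t ∈ [0,a] : h t > 0}`. -/
def posSet (a : ℝ) (h : ℝ → ℝ) : Set ℝ := {t ∈ Set.Icc (0:ℝ) a | 0 < h t}

/-- The set `E₋ = {t ∈ [0,a] : h t < 0}`. -/
def negSet (a : ℝ) (h : ℝ → ℝ) : Set ℝ := {t ∈ Set.Icc (0:ℝ) a | h t < 0}

section AuxA
variable {a t τ : ℝ} {u : ℝ → ℂ}

lemma measurableSet_distrib (hu : Measurable u) (a τ : ℝ) :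
    MeasurableSet {s ∈ Set.Icc (0:ℝ) a | τ < ‖u s‖} :=
  measurableSet_Icc.inter (measurableSet_lt measurable_const hu.norm)

lemma distrib_anti (a : ℝ) (u : ℝ → ℂ) : Antitone (distrib a u) := fun τ τ' h =>
  measure_mono fun s hs => ⟨hs.1, lt_of_le_of_lt h hs.2⟩

lemma distrib_le (a : ℝ) (u : ℝ → ℂ) (τ : ℝ) : distrib a u τ ≤ ENNReal.ofReal a := by
  have h : volume (Set.Icc (0:ℝ) a) = ENNReal.ofReal a := by
    rw [Real.volume_Icc, sub_zero]
  exact h ▸ measure_mono fun s hs => hs.1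

lemma distrib_ne_top (a : ℝ) (u : ℝ → ℂ) (τ : ℝ) : distrib a u τ ≠ ⊤ :=
  ((distrib_le a u τ).trans_lt ENNReal.ofReal_lt_top).ne

lemma distrib_toReal_le (ha : 0 ≤ a) : (distrib a u τ).toReal ≤ a := by
  have := ENNReal.toReal_mono ENNReal.ofReal_ne_top (distrib_le a u τ)
  rwa [ENNReal.toReal_ofReal ha] at this

/-- Right continuity of the distribution function, as a countable supremum. -/
lemma distrib_eq_iSup (a : ℝ) (u : ℝ → ℂ) (τ : ℝ) :
    distrib a u τ = ⨆ n : ℕ, distrib a u (τ + 1/(n+1)) := by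
  have hmono : Monotone fun n : ℕ => {s ∈ Set.Icc (0:ℝ) a | τ + 1/(n+1) < ‖u s‖} := by
    intro n m hnm s hs
    refine ⟨hs.1, lt_of_le_of_lt ?_ hs.2⟩
    have h1 : 1/((m:ℝ)+1) ≤ 1/((n:ℝ)+1) := by
      apply one_div_le_one_div_of_le (by positivity)
      exact_mod_cast Nat.succ_le_succ hnm
    linarith
  have hU : (⋃ n : ℕ, {s ∈ Set.Icc (0:ℝ) a | τ + 1/(n+1) < ‖u s‖})
      = {s ∈ Set.Icc (0:ℝ) a | τ < ‖u s‖} := by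
    ext s
    simp only [mem_iUnion, mem_setOf_eq, Set.mem_sep_iff]
    constructor
    · rintro ⟨n, h1, h2⟩
      refine ⟨h1, lt_of_le_of_lt (le_add_of_nonneg_right (by positivity)) h2⟩
    · rintro ⟨h1, h2⟩
      obtain ⟨n, hn⟩ := exists_nat_one_div_lt (sub_pos.mpr h2)
      exact ⟨n, h1, by linarith⟩
  rw [distrib, ← hU, hmono.measure_iUnion]
  rfl

lemma exists_distrib_le (hu : Measurable u) (ht : 0 < t) :
    ∃ n : ℕ, distrib a u n ≤ ENNReal.ofReal t := by
  by_contra hcon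
  push_neg at hcon
  have hA : Antitone fun n : ℕ => {s ∈ Set.Icc (0:ℝ) a | (n:ℝ) < ‖u s‖} := by
    intro n m hnm s hs
    exact ⟨hs.1, lt_of_le_of_lt (by exact_mod_cast hnm) hs.2⟩
  have hI : (⋂ n : ℕ, {s ∈ Set.Icc (0:ℝ) a | (n:ℝ) < ‖u s‖}) = ∅ := by
    ext s
    simp only [mem_iInter, mem_empty_iff_false, iff_false, not_forall, Set.mem_sep_iff]
    obtain ⟨n, hn⟩ := exists_nat_gt ‖u s‖
    exact ⟨n, fun h => absurd h.2 (not_lt.mpr hn.le)⟩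
  have htend := tendsto_measure_iInter_atTop (μ := volume)
      (fun n => (measurableSet_distrib hu a _).nullMeasurableSet) hA
      ⟨0, ((measure_mono (fun s hs => hs.1)).trans_lt
        (by rw [Real.volume_Icc]; exact ENNReal.ofReal_lt_top)).ne⟩
  rw [hI, measure_empty] at htend
  have hlt : (0:ℝ≥0∞) < ENNReal.ofReal t := ENNReal.ofReal_pos.mpr ht
  obtain ⟨n, hn⟩ := (htend.eventually_lt_const hlt).exists
  exact absurd hn (not_lt.mpr (hcon n).le)

lemma rearr_nonneg (a : ℝ) (u : ℝ → ℂ) (t : ℝ) : 0 ≤ rearr a u t :=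
  Real.sInf_nonneg fun _ hx => hx.1

lemma rearr_le_iff (hu : Measurable u) (ht : 0 < t) (hτ : 0 ≤ τ) :
    rearr a u t ≤ τ ↔ distrib a u τ ≤ ENNReal.ofReal t := by
  constructor
  · intro h
    rw [distrib_eq_iSup a u τ]
    refine iSup_le fun n => ?_
    obtain ⟨m, hm⟩ := exists_distrib_le (a := a) (u := u) hu ht
    have hne : {σ : ℝ | 0 ≤ σ ∧ distrib a u σ ≤ ENNReal.ofReal t}.Nonempty :=
      ⟨m, Nat.cast_nonneg m, hm⟩
    have hbdd : BddBelow {σ : ℝ | 0 ≤ σ ∧ distrib a u σ ≤ ENNReal.ofReal t} :=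
      ⟨0, fun x hx => hx.1⟩
    have hlt : sInf {σ : ℝ | 0 ≤ σ ∧ distrib a u σ ≤ ENNReal.ofReal t} < τ + 1/(n+1) :=
      lt_of_le_of_lt h (lt_add_of_pos_right τ (by positivity))
    obtain ⟨σ, hσ, hσlt⟩ := (csInf_lt_iff hbdd hne).mp hlt
    exact le_trans (distrib_anti a u hσlt.le) hσ.2
  · intro h
    exact csInf_le ⟨0, fun x hx => hx.1⟩ ⟨hτ, h⟩

lemma lt_rearr_iff (hu : Measurable u) (ht : 0 < t) (hτ : 0 ≤ τ) :
    τ < rearr a u t ↔ ENNReal.ofReal t < distrib a u τ := by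
  rw [← not_le, ← not_le, rearr_le_iff hu ht hτ]

lemma rearr_antitoneOn (hu : Measurable u) : AntitoneOn (rearr a u) (Set.Ioc 0 a) := by
  intro t ht t' ht' htt'
  obtain ⟨m, hm⟩ := exists_distrib_le (a := a) (u := u) hu ht.1
  refine csInf_le_csInf ⟨0, fun x hx => hx.1⟩ ⟨m, Nat.cast_nonneg m, hm⟩ ?_
  intro σ hσ
  exact ⟨hσ.1, hσ.2.trans (ENNReal.ofReal_le_ofReal htt')⟩

end AuxA
def Nfun (φ : ℝ → ℝ) (a : ℝ) (u : ℝ → ℂ) : ℝ≥0∞ :=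
  ∫⁻ τ in Set.Ioi (0:ℝ), ENNReal.ofReal (φ ((distrib a u τ).toReal))

section AuxB
variable {a : ℝ} {φ : ℝ → ℝ} {u : ℝ → ℂ}


lemma stieltjesOfOn_apply (hcond : 0 ≤ a ∧ MonotoneOn φ (Set.Icc 0 a) ∧ ContinuousOn φ (Set.Icc 0 a)) (t : ℝ) : (stieltjesOfOn φ a) t = φ (clampIcc a t) := by
  rw [stieltjesOfOn, dif_pos hcond]

lemma stieltjesOfOn_cont (hcond : 0 ≤ a ∧ MonotoneOn φ (Set.Icc 0 a) ∧ ContinuousOn φ (Set.Icc 0 a)) : Continuous (stieltjesOfOn φ a) := by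
  have : Continuous fun t => φ (clampIcc a t) :=
    hcond.2.2.comp_continuous (clampIcc_continuous a) (fun x => clampIcc_mem a x hcond.1)
  simpa [funext fun t => stieltjesOfOn_apply (a := a) hcond t] using this

lemma stieltjesOfOn_measure_Ioo (hcond : 0 ≤ a ∧ MonotoneOn φ (Set.Icc 0 a) ∧ ContinuousOn φ (Set.Icc 0 a)) (hφ0 : φ 0 = 0) {c : ℝ} (hc : c ∈ Set.Icc 0 a) :
    (stieltjesOfOn φ a).measure (Set.Ioo 0 c) = ENNReal.ofReal (φ c) := by
  rw [StieltjesFunction.measure_Ioo]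
  have hl : Function.leftLim (stieltjesOfOn φ a) c = (stieltjesOfOn φ a) c :=
    leftLim_eq_of_tendsto
      (((stieltjesOfOn_cont hcond).tendsto c).mono_left nhdsWithin_le_nhds)
  rw [hl, stieltjesOfOn_apply hcond, stieltjesOfOn_apply hcond]
  have h1 : clampIcc a c = c := by
    simp only [clampIcc, max_eq_left hc.1, min_eq_left hc.2]
  have h2 : clampIcc a 0 = 0 := by
    simp only [clampIcc, max_self, min_eq_left hcond.1]
  rw [h1, h2, hφ0, sub_zero]

lemma eLorentz_eq_Nfun (hcond : 0 ≤ a ∧ MonotoneOn φ (Set.Icc 0 a) ∧ ContinuousOn φ (Set.Icc 0 a)) (hu : Measurable u) (ha : 0 < a) (hφ0 : φ 0 = 0) :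
    eLorentzNorm φ a u = Nfun φ a u := by
  rw [eLorentzNorm,
    lintegral_eq_lintegral_meas_lt _ (ae_of_all _ (rearr_nonneg a u))
      (aemeasurable_restrict_of_antitoneOn measurableSet_Ioc (rearr_antitoneOn hu))]
  refine setLIntegral_congr_fun measurableSet_Ioi (fun τ hτ => ?_)
  have hτ0 : (0:ℝ) ≤ τ := le_of_lt hτ
  rw [Measure.restrict_apply' measurableSet_Ioc]
  have hset : {t : ℝ | τ < rearr a u t} ∩ Set.Ioc 0 a
      = Set.Ioo 0 ((distrib a u τ).toReal) := by
    ext t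
    simp only [Set.mem_inter_iff, Set.mem_setOf_eq, Set.mem_Ioc, Set.mem_Ioo]
    constructor
    · rintro ⟨h1, h2, h3⟩
      refine ⟨h2, ?_⟩
      have := (lt_rearr_iff hu h2 hτ0).mp h1
      have h4 : (ENNReal.ofReal t).toReal < (distrib a u τ).toReal :=
        ENNReal.toReal_strict_mono (distrib_ne_top a u τ) this
      rwa [ENNReal.toReal_ofReal (le_of_lt h2)] at h4
    · rintro ⟨h1, h2⟩
      have ht_le : t ≤ a := le_trans (le_of_lt h2) (distrib_toReal_le ha.le)
      refine ⟨?_, h1, ht_le⟩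
      rw [lt_rearr_iff hu h1 hτ0]
      exact (ENNReal.ofReal_lt_iff_lt_toReal (le_of_lt h1) (distrib_ne_top a u τ)).mpr h2
  rw [hset, stieltjesOfOn_measure_Ioo hcond hφ0
    ⟨ENNReal.toReal_nonneg, distrib_toReal_le ha.le⟩]

end AuxB
def GoodPhi (φ : ℝ → ℝ) (a : ℝ) : Prop :=
  0 < a ∧ ConcaveOn ℝ (Set.Icc 0 a) φ ∧ ContinuousOn φ (Set.Icc 0 a) ∧
    StrictMonoOn φ (Set.Icc 0 a) ∧ φ 0 = 0 ∧ φ a = 1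

def phc (φ : ℝ → ℝ) (a : ℝ) : ℝ → ℝ := fun t => φ (clampIcc a t)

section AuxC
variable {φ : ℝ → ℝ} {a : ℝ}

lemma phc_eq (H : GoodPhi φ a) {t : ℝ} (ht : t ∈ Set.Icc 0 a) : phc φ a t = φ t := by
  have : clampIcc a t = t := by
    simp only [clampIcc, max_eq_left ht.1, min_eq_left ht.2]
  rw [phc, this]

lemma phc_zero (H : GoodPhi φ a) {t : ℝ} (ht : t ≤ 0) : phc φ a t = 0 := by
  have : clampIcc a t = 0 := by
    simp only [clampIcc, max_eq_right ht, min_eq_left H.1.le]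
  rw [phc, this, H.2.2.2.2.1]

lemma phc_one (H : GoodPhi φ a) {t : ℝ} (ht : a ≤ t) : phc φ a t = 1 := by
  have : clampIcc a t = a := by
    simp only [clampIcc, min_eq_right (le_max_of_le_left ht)]
  rw [phc, this, H.2.2.2.2.2]

lemma phc_mono (H : GoodPhi φ a) : Monotone (phc φ a) := fun s t hst =>
  (H.2.2.2.1.monotoneOn) (clampIcc_mem a s H.1.le) (clampIcc_mem a t H.1.le)
    (clampIcc_mono a hst)

lemma phc_cont (H : GoodPhi φ a) : Continuous (phc φ a) :=
  H.2.2.1.comp_continuous (clampIcc_continuous a) (fun x => clampIcc_mem a x H.1.le)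

lemma phc_nonneg (H : GoodPhi φ a) (t : ℝ) : 0 ≤ phc φ a t := by
  have h := H.2.2.2.1.monotoneOn (Set.mem_Icc.mpr ⟨le_refl (0:ℝ), H.1.le⟩)
    (clampIcc_mem a t H.1.le) (clampIcc_mem a t H.1.le).1
  rw [H.2.2.2.2.1] at h
  exact h

lemma phc_le_one (H : GoodPhi φ a) (t : ℝ) : phc φ a t ≤ 1 := by
  have h := H.2.2.2.1.monotoneOn (clampIcc_mem a t H.1.le)
    (Set.mem_Icc.mpr ⟨H.1.le, le_refl a⟩) (clampIcc_mem a t H.1.le).2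
  rw [H.2.2.2.2.2] at h
  exact h

lemma phc_strict (H : GoodPhi φ a) {x h : ℝ} (hx : x ∈ Set.Ico 0 a) (hh : 0 < h) :
    phc φ a x < phc φ a (x + h) := by
  have h1 : clampIcc a x = x := by
    simp only [clampIcc, max_eq_left hx.1, min_eq_left hx.2.le]
  have h2 : clampIcc a (x + h) = min (x + h) a := by
    simp only [clampIcc, max_eq_left (by linarith [hx.1] : (0:ℝ) ≤ x + h)]
  have h3 : min (x + h) a ∈ Set.Icc 0 a := ⟨le_min (by linarith [hx.1]) H.1.le, min_le_right _ _⟩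
  have h4 : x < min (x + h) a := lt_min (by linarith) hx.2
  calc phc φ a x = φ x := by rw [phc, h1]
    _ < φ (min (x + h) a) := H.2.2.2.1 ⟨hx.1, hx.2.le⟩ h3 h4
    _ = phc φ a (x + h) := by rw [phc, h2]

lemma phc_concave (H : GoodPhi φ a) : ConcaveOn ℝ (Set.Ici 0) (phc φ a) := by
  have key : ∀ x y α β : ℝ, 0 ≤ x → x ≤ y → 0 ≤ α → 0 ≤ β → α + β = 1 →
      α * phc φ a x + β * phc φ a y ≤ phc φ a (α * x + β * y) := by
    intro x y α β hx hxy hα hβ hαβ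
    have hy : 0 ≤ y := hx.trans hxy
    have hzx : x ≤ α * x + β * y := by nlinarith
    have hzy : α * x + β * y ≤ y := by nlinarith
    set z := α * x + β * y with hz
    rcases le_or_gt y a with hya | hya
    · -- all in [0, a]
      have h1 := H.2.1.2 (Set.mem_Icc.mpr ⟨hx, hxy.trans hya⟩) (Set.mem_Icc.mpr ⟨hy, hya⟩) hα hβ hαβ
      simp only [smul_eq_mul] at h1
      rw [phc_eq H ⟨hx, hxy.trans hya⟩, phc_eq H ⟨hy, hya⟩,
        phc_eq H ⟨hx.trans hzx, hzy.trans hya⟩]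
      exact h1
    · rcases le_or_gt a x with hax | hax
      · -- all ≥ a
        rw [phc_one H hax, phc_one H (hax.trans hxy), phc_one H (hax.trans hzx)]
        linarith
      · rw [phc_one H hya.le]
        rcases le_or_gt a z with haz | haz
        · rw [phc_one H haz]
          nlinarith [phc_le_one H x]
        · -- x < a, z < a, y > a
          rcases eq_or_lt_of_le hβ with hβ0 | hβ0
          · -- β = 0 : z = x
            have hα1 : α = 1 := by linarith
            have hzx' : z = x := by rw [hz, hα1, ← hβ0]; ring
            rw [hzx', hα1, ← hβ0]
            simp
          · have hxa : x < a := hax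
            have hxz : x ≤ z := hzx
            set s := (a - z) / (a - x) with hs
            have hax' : 0 < a - x := by linarith
            have hs0 : 0 ≤ s := div_nonneg (by linarith) hax'.le
            have hs1 : s ≤ 1 := by
              rw [div_le_one hax']; linarith
            have hsc : s * (a - x) = a - z := div_mul_cancel₀ _ hax'.ne'
            have hsz : s * x + (1 - s) * a = z := by linear_combination (-1 : ℝ) * hsc
            have h1 := H.2.1.2 (Set.mem_Icc.mpr ⟨hx, hxa.le⟩)
              (Set.mem_Icc.mpr ⟨H.1.le, le_refl a⟩) hs0
              (show (0:ℝ) ≤ 1 - s by linarith) (show s + (1 - s) = 1 by ring)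
            simp only [smul_eq_mul] at h1
            rw [hsz] at h1
            have hsα : s ≤ α := by
              rw [div_le_iff₀ hax']
              have : β * a ≤ β * y := by nlinarith
              nlinarith
            have hφx1 : φ x ≤ 1 := by
              rw [← phc_eq H ⟨hx, hxa.le⟩]; exact phc_le_one H x
            rw [phc_eq H ⟨hx, hxa.le⟩, phc_eq H ⟨hx.trans hzx, haz.le⟩]
            rw [H.2.2.2.2.2] at h1
            nlinarith
  constructor
  · exact convex_Ici 0
  · intro x hx y hy α β hα hβ hαβ
    simp only [smul_eq_mul]
    rcases le_total x y with hxy | hxy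
    · exact key x y α β hx hxy hα hβ hαβ
    · rw [add_comm (α * phc φ a x), add_comm (α * x)]
      exact key y x β α hy hxy hβ hα (by linarith)


lemma slope_anti_h (H : GoodPhi φ a) {x h h' : ℝ} (hx : 0 ≤ x) (h0 : 0 < h) (hh : h ≤ h') :
    (phc φ a (x + h') - phc φ a x) / h' ≤ (phc φ a (x + h) - phc φ a x) / h := by
  have hcv : ConvexOn ℝ (Set.Ici 0) (fun t => -(phc φ a t)) := (phc_concave H).neg
  have h0' : 0 < h' := h0.trans_le hh
  have s1 := hcv.secant_mono (a := x) (x := x + h) (y := x + h')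
    (Set.mem_Ici.mpr hx) (Set.mem_Ici.mpr (by linarith)) (Set.mem_Ici.mpr (by linarith))
    (lt_add_of_pos_right x h0).ne' (lt_add_of_pos_right x h0').ne' (by linarith)
  simp only [neg_sub_neg] at s1
  rw [show x + h - x = h from by ring, show x + h' - x = h' from by ring] at s1
  have d1 : (phc φ a x - phc φ a (x + h)) / h = -((phc φ a (x + h) - phc φ a x) / h) := by
    rw [← neg_sub, neg_div]
  have d2 : (phc φ a x - phc φ a (x + h')) / h' = -((phc φ a (x + h') - phc φ a x) / h') := by
    rw [← neg_sub, neg_div]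
  rw [d1, d2] at s1
  linarith

lemma slope_anti_x (H : GoodPhi φ a) {x x' h : ℝ} (hx : 0 ≤ x) (hxx : x ≤ x') (h0 : 0 < h) :
    (phc φ a (x' + h) - phc φ a x') / h ≤ (phc φ a (x + h) - phc φ a x) / h := by
  rcases eq_or_lt_of_le hxx with rfl | hlt
  · exact le_refl _
  have hcv : ConvexOn ℝ (Set.Ici 0) (fun t => -(phc φ a t)) := (phc_concave H).neg
  have s1 := hcv.secant_mono (a := x' + h) (x := x) (y := x')
    (Set.mem_Ici.mpr (by linarith)) (Set.mem_Ici.mpr hx) (Set.mem_Ici.mpr (by linarith))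
    (by intro hc; linarith [hc]) (lt_add_of_pos_right x' h0).ne hxx
  simp only [neg_sub_neg] at s1
  rw [show x - (x' + h) = -(x' + h - x) from by ring,
    show x' - (x' + h) = -h from by ring, div_neg, div_neg] at s1
  have s1' : (phc φ a (x' + h) - phc φ a x') / h
      ≤ (phc φ a (x' + h) - phc φ a x) / (x' + h - x) := by linarith
  have s2 := slope_anti_h H (h' := x' + h - x) hx h0 (by linarith)
  rw [show x + (x' + h - x) = x' + h from by ring] at s2
  linarith

lemma slope_le_base (H : GoodPhi φ a) {x h : ℝ} (hx : 0 < x) (h0 : 0 < h) :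
    (phc φ a (x + h) - phc φ a x) / h ≤ phc φ a x / x := by
  have s1 := (phc_concave H).slope_anti_adjacent (x := 0) (y := x) (z := x + h)
    (Set.mem_Ici.mpr le_rfl) (Set.mem_Ici.mpr (by linarith)) hx (lt_add_of_pos_right x h0)
  rw [show x + h - x = h from by ring, sub_zero, phc_zero H le_rfl, sub_zero] at s1
  exact s1

def etaSeq (φ : ℝ → ℝ) (a : ℝ) (n : ℕ) (x : ℝ) : ℝ :=
  (phc φ a (x + 1/(n+1)) - phc φ a x) / (1/(n+1))

def eta (φ : ℝ → ℝ) (a : ℝ) (x : ℝ) : ℝ≥0∞ :=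
  if x ∈ Set.Ioo 0 a then ⨆ n : ℕ, ENNReal.ofReal (etaSeq φ a n x) else 0

def etar (φ : ℝ → ℝ) (a : ℝ) (x : ℝ) : ℝ := (eta φ a x).toReal

lemma hn_pos (n : ℕ) : (0:ℝ) < 1/(n+1) := by positivity

lemma hn_anti {n m : ℕ} (hnm : n ≤ m) : (1:ℝ)/(m+1) ≤ 1/(n+1) := by
  apply one_div_le_one_div_of_le (by positivity)
  exact_mod_cast Nat.succ_le_succ hnm

lemma etaSeq_nonneg (H : GoodPhi φ a) (n : ℕ) (x : ℝ) : 0 ≤ etaSeq φ a n x :=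
  div_nonneg (sub_nonneg.mpr (phc_mono H (le_add_of_nonneg_right (hn_pos n).le)))
    (hn_pos n).le

lemma etaSeq_cont (H : GoodPhi φ a) (n : ℕ) : Continuous (etaSeq φ a n) :=
  (((phc_cont H).comp (continuous_id.add continuous_const)).sub (phc_cont H)).div_const _

lemma etaSeq_mono (H : GoodPhi φ a) {x : ℝ} (hx : 0 ≤ x) :
    Monotone fun n : ℕ => ENNReal.ofReal (etaSeq φ a n x) := fun n m hnm =>
  ENNReal.ofReal_le_ofReal (slope_anti_h H hx (hn_pos m) (hn_anti hnm))

lemma etaSeq_pos (H : GoodPhi φ a) (n : ℕ) {x : ℝ} (hx : x ∈ Set.Ico 0 a) :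
    0 < etaSeq φ a n x :=
  div_pos (sub_pos.mpr (phc_strict H hx (hn_pos n))) (hn_pos n)

lemma eta_of_mem {x : ℝ} (hx : x ∈ Set.Ioo 0 a) :
    eta φ a x = ⨆ n : ℕ, ENNReal.ofReal (etaSeq φ a n x) := if_pos hx

lemma eta_of_not_mem {x : ℝ} (hx : x ∉ Set.Ioo 0 a) : eta φ a x = 0 := if_neg hx

lemma eta_le (H : GoodPhi φ a) {x : ℝ} (hx : x ∈ Set.Ioo 0 a) :
    eta φ a x ≤ ENNReal.ofReal (phc φ a x / x) := by
  rw [eta_of_mem hx]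
  exact iSup_le fun n => ENNReal.ofReal_le_ofReal (slope_le_base H hx.1 (hn_pos n))

lemma eta_ne_top (H : GoodPhi φ a) {x : ℝ} (hx : x ∈ Set.Ioo 0 a) : eta φ a x ≠ ⊤ :=
  ((eta_le H hx).trans_lt ENNReal.ofReal_lt_top).ne

lemma eta_pos (H : GoodPhi φ a) {x : ℝ} (hx : x ∈ Set.Ioo 0 a) : 0 < eta φ a x := by
  rw [eta_of_mem hx]
  refine lt_of_lt_of_le ?_ (le_iSup _ 0)
  exact ENNReal.ofReal_pos.mpr (etaSeq_pos H 0 ⟨hx.1.le, hx.2⟩)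

lemma eta_anti (H : GoodPhi φ a) : AntitoneOn (eta φ a) (Set.Ioo 0 a) := by
  intro x hx x' hx' hxx
  rw [eta_of_mem hx, eta_of_mem hx']
  exact iSup_mono fun n =>
    ENNReal.ofReal_le_ofReal (slope_anti_x H hx.1.le hxx (hn_pos n))

lemma etar_nonneg (φ : ℝ → ℝ) (a x : ℝ) : 0 ≤ etar φ a x := ENNReal.toReal_nonneg

lemma etar_anti (H : GoodPhi φ a) : AntitoneOn (etar φ a) (Set.Ioo 0 a) := by
  intro x hx x' hx' hxx
  exact ENNReal.toReal_mono (eta_ne_top H hx) (eta_anti H hx hx' hxx)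

lemma etar_pos (H : GoodPhi φ a) {x : ℝ} (hx : x ∈ Set.Ioo 0 a) : 0 < etar φ a x :=
  ENNReal.toReal_pos (eta_pos H hx).ne' (eta_ne_top H hx)

lemma etar_of_not_mem {x : ℝ} (hx : x ∉ Set.Ioo 0 a) : etar φ a x = 0 := by
  rw [etar, eta_of_not_mem hx]; rfl

lemma eta_meas (H : GoodPhi φ a) : Measurable (eta φ a) := by
  unfold eta
  exact Measurable.ite measurableSet_Ioo
    (Measurable.iSup fun n => ((etaSeq_cont H n).measurable).ennreal_ofReal)
    measurable_const

lemma etar_meas (H : GoodPhi φ a) : Measurable (etar φ a) :=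
  (eta_meas H).ennreal_toReal

lemma ofReal_etar (H : GoodPhi φ a) {x : ℝ} (hx : x ∈ Set.Ioo 0 a) :
    ENNReal.ofReal (etar φ a x) = eta φ a x := ENNReal.ofReal_toReal (eta_ne_top H hx)


lemma eta_setIntegral (H : GoodPhi φ a) {b : ℝ} (hb : b ∈ Set.Icc 0 a) :
    ∫⁻ x in Set.Ioo 0 b, eta φ a x = ENNReal.ofReal (φ b) := by
  rcases eq_or_lt_of_le hb.1 with rfl | hb0
  · simp [Set.Ioo_self, H.2.2.2.2.1]
  have hba : b ≤ a := hb.2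
  have hcongr : ∫⁻ x in Set.Ioo 0 b, eta φ a x
      = ∫⁻ x in Set.Ioo 0 b, ⨆ n : ℕ, ENNReal.ofReal (etaSeq φ a n x) := by
    refine setLIntegral_congr_fun measurableSet_Ioo (fun x hx => ?_)
    exact eta_of_mem ⟨hx.1, hx.2.trans_le hba⟩
  have hmeas : ∀ n : ℕ, AEMeasurable (fun x => ENNReal.ofReal (etaSeq φ a n x))
      (volume.restrict (Set.Ioo 0 b)) := fun n =>
    ((etaSeq_cont H n).measurable.ennreal_ofReal).aemeasurable
  have hmono : ∀ᵐ x ∂(volume.restrict (Set.Ioo (0:ℝ) b)),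
      Monotone fun n : ℕ => ENNReal.ofReal (etaSeq φ a n x) := by
    filter_upwards [ae_restrict_mem measurableSet_Ioo] with x hx
    exact etaSeq_mono H hx.1.le
  rw [hcongr, lintegral_iSup' hmeas hmono]
  have hiw : ∀ u v : ℝ, IntervalIntegrable (phc φ a) volume u v :=
    fun u v => (phc_cont H).intervalIntegrable u v
  have hiw' : ∀ (d : ℝ) (u v : ℝ),
      IntervalIntegrable (fun x => phc φ a (x + d)) volume u v := fun d u v =>
    ((phc_cont H).comp (continuous_id.add continuous_const)).intervalIntegrable u v
  have hInt : ∀ n : ℕ, ∫⁻ x in Set.Ioo 0 b, ENNReal.ofReal (etaSeq φ a n x)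
      = ENNReal.ofReal ((∫ x in b..(b + 1/(n+1)), phc φ a x) / (1/(n+1))
          - (∫ x in (0:ℝ)..(1/(n+1)), phc φ a x) / (1/(n+1))) := by
    intro n
    have hint : IntegrableOn (etaSeq φ a n) (Set.Ioo 0 b) volume :=
      ((etaSeq_cont H n).integrableOn_Icc).mono_set Set.Ioo_subset_Icc_self
    rw [← ofReal_integral_eq_lintegral_ofReal hint
      (ae_of_all _ fun x => etaSeq_nonneg H n x)]
    congr 1
    have h1 : ∫ x in Set.Ioo (0:ℝ) b, etaSeq φ a n x
        = ∫ x in (0:ℝ)..b, etaSeq φ a n x := by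
      rw [intervalIntegral.integral_of_le hb0.le, integral_Ioc_eq_integral_Ioo]
    have h2 : ∫ x in (0:ℝ)..b, etaSeq φ a n x
        = (∫ x in (0:ℝ)..b, (phc φ a (x + 1/(n+1)) - phc φ a x)) / (1/(n+1)) := by
      simp only [etaSeq]
      rw [intervalIntegral.integral_div]
    have h3 : ∫ x in (0:ℝ)..b, (phc φ a (x + 1/(n+1)) - phc φ a x)
        = (∫ x in b..(b + 1/(n+1)), phc φ a x)
          - ∫ x in (0:ℝ)..(1/(n+1)), phc φ a x := by
      rw [intervalIntegral.integral_sub (hiw' _ _ _) (hiw _ _)]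
      have h4 : ∫ x in (0:ℝ)..b, phc φ a (x + 1/(n+1))
          = ∫ x in (1/(n+1))..(b + 1/(n+1)), phc φ a x := by
        rw [intervalIntegral.integral_comp_add_right (phc φ a) (1/(n+1)), zero_add]
      have h5 := intervalIntegral.integral_add_adjacent_intervals
        (hiw (1/(n+1)) b) (hiw b (b + 1/(n+1)))
      have h6 := intervalIntegral.integral_add_adjacent_intervals
        (hiw 0 (1/(n+1))) (hiw (1/(n+1)) b)
      rw [h4]
      linarith
    rw [h1, h2, h3, sub_div]
  have hL : Tendsto
      (fun n : ℕ => ((∫ x in b..(b + 1/(n+1)), phc φ a x) / (1/(n+1))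
        - (∫ x in (0:ℝ)..(1/(n+1)), phc φ a x) / (1/(n+1))))
      atTop (𝓝 (phc φ a b)) := by
    have hcn : Tendsto (fun n : ℕ => 1/((n:ℝ)+1)) atTop (𝓝 0) :=
      tendsto_one_div_add_atTop_nhds_zero_nat
    have hlow : Tendsto (fun n : ℕ => phc φ a b - phc φ a (1/(n+1))) atTop
        (𝓝 (phc φ a b)) := by
      have := ((phc_cont H).tendsto 0).comp hcn
      have h0 : phc φ a 0 = 0 := phc_zero H le_rfl
      have := tendsto_const_nhds (x := phc φ a b) (f := atTop (α := ℕ)) |>.sub this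
      rwa [h0, sub_zero] at this
    have hup : Tendsto (fun n : ℕ => phc φ a (b + 1/(n+1))) atTop (𝓝 (phc φ a b)) := by
      have h1 : Tendsto (fun n : ℕ => b + 1/((n:ℝ)+1)) atTop (𝓝 b) := by
        simpa using (tendsto_const_nhds (x := b) (f := atTop (α := ℕ))).add hcn
      exact ((phc_cont H).tendsto b).comp h1
    refine tendsto_of_tendsto_of_tendsto_of_le_of_le hlow hup ?_ ?_
    · intro n
      have hc := hn_pos n
      have hA : (1/((n:ℝ)+1)) * phc φ a b ≤ ∫ x in b..(b + 1/(n+1)), phc φ a x := by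
        have := intervalIntegral.integral_mono_on (by linarith : b ≤ b + 1/((n:ℝ)+1))
          (intervalIntegrable_const) (hiw b (b + 1/(n+1)))
          (fun x hx => phc_mono H hx.1)
        rwa [intervalIntegral.integral_const, smul_eq_mul,
          add_sub_cancel_left] at this
      have hB : ∫ x in (0:ℝ)..(1/(n+1)), phc φ a x ≤ (1/((n:ℝ)+1)) * phc φ a (1/(n+1)) := by
        have := intervalIntegral.integral_mono_on hc.le
          (hiw 0 (1/(n+1))) (intervalIntegrable_const)
          (fun x hx => phc_mono H hx.2)
        rwa [intervalIntegral.integral_const, smul_eq_mul, sub_zero] at this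
      have hA' : phc φ a b ≤ (∫ x in b..(b + 1/(n+1)), phc φ a x) / (1/(n+1)) :=
        (le_div_iff₀ hc).mpr (by rw [mul_comm]; exact hA)
      have hB' : (∫ x in (0:ℝ)..(1/(n+1)), phc φ a x) / (1/(n+1)) ≤ phc φ a (1/(n+1)) :=
        (div_le_iff₀ hc).mpr (by rw [mul_comm]; exact hB)
      linarith
    · intro n
      have hc := hn_pos n
      have hA : ∫ x in b..(b + 1/(n+1)), phc φ a x ≤ (1/((n:ℝ)+1)) * phc φ a (b + 1/(n+1)) := by
        have := intervalIntegral.integral_mono_on (by linarith : b ≤ b + 1/((n:ℝ)+1))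
          (hiw b (b + 1/(n+1))) (intervalIntegrable_const)
          (fun x hx => phc_mono H hx.2)
        rwa [intervalIntegral.integral_const, smul_eq_mul,
          add_sub_cancel_left] at this
      have hB : 0 ≤ ∫ x in (0:ℝ)..(1/(n+1)), phc φ a x :=
        intervalIntegral.integral_nonneg hc.le (fun x _ => phc_nonneg H x)
      have hA' : (∫ x in b..(b + 1/(n+1)), phc φ a x) / (1/(n+1)) ≤ phc φ a (b + 1/(n+1)) :=
        (div_le_iff₀ hc).mpr (by rw [mul_comm]; exact hA)
      have hB' : 0 ≤ (∫ x in (0:ℝ)..(1/(n+1)), phc φ a x) / (1/(n+1)) :=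
        div_nonneg hB hc.le
      linarith
  have hSmono : Monotone fun n : ℕ => ∫⁻ x in Set.Ioo 0 b,
      ENNReal.ofReal (etaSeq φ a n x) := by
    intro n m hnm
    refine lintegral_mono_ae ?_
    filter_upwards [ae_restrict_mem measurableSet_Ioo] with x hx
    exact etaSeq_mono H hx.1.le hnm
  have htend1 := tendsto_atTop_iSup hSmono
  have htend2 : Tendsto (fun n : ℕ => ∫⁻ x in Set.Ioo 0 b,
      ENNReal.ofReal (etaSeq φ a n x)) atTop (𝓝 (ENNReal.ofReal (phc φ a b))) := by
    simp only [hInt]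
    exact (ENNReal.continuous_ofReal.tendsto (phc φ a b)).comp hL
  have := tendsto_nhds_unique htend1 htend2
  rw [this, phc_eq H hb]

def Lfun (φ : ℝ → ℝ) (a : ℝ) (σ : ℝ) : ℝ≥0∞ :=
  volume {x ∈ Set.Ioo (0:ℝ) a | σ < etar φ a x}

lemma Lfun_struct (H : GoodPhi φ a) (σ : ℝ) :
    ∃ c ∈ Set.Icc (0:ℝ) a, Set.Ioo 0 c ⊆ {x ∈ Set.Ioo (0:ℝ) a | σ < etar φ a x}
      ∧ {x ∈ Set.Ioo (0:ℝ) a | σ < etar φ a x} ⊆ Set.Ioc 0 c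
      ∧ Lfun φ a σ = ENNReal.ofReal c := by
  set S := {x ∈ Set.Ioo (0:ℝ) a | σ < etar φ a x} with hS
  have hbdd : BddAbove (insert (0:ℝ) S) := by
    refine ⟨a, fun x hx => ?_⟩
    rcases hx with rfl | hx
    · exact H.1.le
    · exact hx.1.2.le
  set c := sSup (insert (0:ℝ) S) with hc
  have hc0 : 0 ≤ c := le_csSup hbdd (Set.mem_insert 0 S)
  have hca : c ≤ a := csSup_le (Set.insert_nonempty 0 S)
    (fun x hx => by rcases hx with rfl | hx; exacts [H.1.le, hx.1.2.le])
  have hsub1 : Set.Ioo 0 c ⊆ S := by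
    intro x hx
    obtain ⟨y, hy, hxy⟩ := exists_lt_of_lt_csSup (Set.insert_nonempty 0 S) hx.2
    rcases hy with rfl | hy
    · linarith [hx.1]
    · have hxm : x ∈ Set.Ioo (0:ℝ) a := ⟨hx.1, lt_trans hxy hy.1.2⟩
      exact ⟨hxm, lt_of_lt_of_le hy.2 (etar_anti H hxm hy.1 hxy.le)⟩
  have hsub2 : S ⊆ Set.Ioc 0 c := fun x hx =>
    ⟨hx.1.1, le_csSup hbdd (Set.mem_insert_of_mem 0 hx)⟩
  refine ⟨c, ⟨hc0, hca⟩, hsub1, hsub2, ?_⟩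
  refine le_antisymm ?_ ?_
  · calc Lfun φ a σ ≤ volume (Set.Ioc 0 c) := measure_mono hsub2
      _ = ENNReal.ofReal c := by rw [Real.volume_Ioc, sub_zero]
  · calc ENNReal.ofReal c = volume (Set.Ioo 0 c) := by rw [Real.volume_Ioo, sub_zero]
      _ ≤ Lfun φ a σ := measure_mono hsub1

lemma Lfun_inter (H : GoodPhi φ a) {σ b : ℝ} (hb : b ∈ Set.Icc 0 a) :
    volume {x ∈ Set.Ioo (0:ℝ) b | σ < etar φ a x}
      = min (ENNReal.ofReal b) (Lfun φ a σ) := by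
  obtain ⟨c, hcmem, hsub1, hsub2, hLc⟩ := Lfun_struct H σ
  have hset : {x ∈ Set.Ioo (0:ℝ) b | σ < etar φ a x}
      = {x ∈ Set.Ioo (0:ℝ) a | σ < etar φ a x} ∩ Set.Ioo 0 b := by
    ext x
    constructor
    · rintro ⟨hx, hσ⟩
      exact ⟨⟨⟨hx.1, hx.2.trans_le hb.2⟩, hσ⟩, hx⟩
    · rintro ⟨⟨_, hσ⟩, hx⟩
      exact ⟨hx, hσ⟩
  rw [hset, hLc, ← Monotone.map_min (fun _ _ h => ENNReal.ofReal_le_ofReal h)]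
  refine le_antisymm ?_ ?_
  · calc volume ({x ∈ Set.Ioo (0:ℝ) a | σ < etar φ a x} ∩ Set.Ioo 0 b)
        ≤ volume (Set.Ioc 0 (min b c)) := by
          refine measure_mono fun x hx => ?_
          exact ⟨hx.2.1, le_min hx.2.2.le (hsub2 hx.1).2⟩
      _ = ENNReal.ofReal (min b c) := by rw [Real.volume_Ioc, sub_zero]
  · calc ENNReal.ofReal (min b c) = volume (Set.Ioo 0 (min b c)) := by
          rw [Real.volume_Ioo, sub_zero]
      _ ≤ volume ({x ∈ Set.Ioo (0:ℝ) a | σ < etar φ a x} ∩ Set.Ioo 0 b) := by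
          refine measure_mono fun x hx => ?_
          exact ⟨hsub1 ⟨hx.1, hx.2.trans_le (min_le_right b c)⟩,
            ⟨hx.1, hx.2.trans_le (min_le_left b c)⟩⟩
end AuxC

lemma GoodPhi_pos {φ : ℝ → ℝ} {a : ℝ} (H : GoodPhi φ a) : 0 < a := H.1

section AuxD
variable {a x y τ : ℝ} {f : ℝ → ℂ}

/-- the "level CDF" within the level set of `s`. -/
def levelCDF (a : ℝ) (f : ℝ → ℂ) (s : ℝ) : ℝ≥0∞ :=
  volume {t ∈ Set.Icc (0:ℝ) a | t ≤ s ∧ ‖f t‖ = ‖f s‖}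

/-- The (randomized) rank function of `f` on `[0,a]`. -/
def Rhat (a : ℝ) (f : ℝ → ℂ) (s : ℝ) : ℝ :=
  (distrib a f ‖f s‖).toReal + (levelCDF a f s).toReal

/-- measure of `{‖f‖ ≥ c}` within `[0,a]`. -/
def dge (a : ℝ) (f : ℝ → ℂ) (c : ℝ) : ℝ≥0∞ :=
  volume {t ∈ Set.Icc (0:ℝ) a | c ≤ ‖f t‖}

lemma sep_subset_Icc_vol_ne_top {p : ℝ → Prop} : volume {t ∈ Set.Icc (0:ℝ) a | p t} ≠ ⊤ :=
  (lt_of_le_of_lt (measure_mono fun t ht => ht.1)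
    (by rw [Real.volume_Icc]; exact ENNReal.ofReal_lt_top)).ne

lemma levelCDF_ne_top : levelCDF a f s ≠ ⊤ := sep_subset_Icc_vol_ne_top

lemma dge_ne_top : dge a f c ≠ ⊤ := sep_subset_Icc_vol_ne_top

lemma Rhat_nonneg (a : ℝ) (f : ℝ → ℂ) (s : ℝ) : 0 ≤ Rhat a f s :=
  add_nonneg ENNReal.toReal_nonneg ENNReal.toReal_nonneg

lemma Rhat_measurable (hfm : Measurable f) (ha : 0 ≤ a) : Measurable (Rhat a f) := by
  have h1 : Measurable fun s => (distrib a f ‖f s‖).toReal :=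
    ((distrib_anti a f).measurable.comp hfm.norm).ennreal_toReal
  have h2 : Measurable fun s => (levelCDF a f s).toReal := by
    have hset : MeasurableSet {q : (ℝ × ℝ) × ℝ |
        q.2 ∈ Set.Icc (0:ℝ) a ∧ q.2 ≤ q.1.1 ∧ ‖f q.2‖ = q.1.2} := by
      refine MeasurableSet.inter (measurable_snd measurableSet_Icc) ?_
      refine MeasurableSet.inter ?_ ?_
      · exact measurableSet_le measurable_snd (measurable_fst.comp measurable_fst)
      · exact measurableSet_eq_fun (hfm.norm.comp measurable_snd)
          (measurable_snd.comp measurable_fst)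
    have hκ : Measurable fun p : ℝ × ℝ => volume (Prod.mk p ⁻¹'
        {q : (ℝ × ℝ) × ℝ | q.2 ∈ Set.Icc (0:ℝ) a ∧ q.2 ≤ q.1.1 ∧ ‖f q.2‖ = q.1.2}) :=
      measurable_measure_prodMk_left hset
    have : (fun s => levelCDF a f s)
        = (fun p : ℝ × ℝ => volume (Prod.mk p ⁻¹'
          {q : (ℝ × ℝ) × ℝ | q.2 ∈ Set.Icc (0:ℝ) a ∧ q.2 ≤ q.1.1 ∧ ‖f q.2‖ = q.1.2}))
          ∘ (fun s => (s, ‖f s‖)) := by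
      funext s
      rfl
    have h3 : Measurable fun s => levelCDF a f s := by
      rw [this]
      exact hκ.comp (measurable_id.prodMk hfm.norm)
    exact h3.ennreal_toReal
  exact h1.add h2

/-- Claim 1: points with `‖f s‖ > rearr a f x` have rank at most `x`. -/
lemma Rhat_le_of_gt (hfm : Measurable f) (hx : 0 < x) {s : ℝ}
    (hgt : rearr a f x < ‖f s‖) : Rhat a f s ≤ x := by
  have hd : distrib a f (rearr a f x) ≤ ENNReal.ofReal x :=
    (rearr_le_iff hfm hx (rearr_nonneg a f x)).mp le_rfl
  have hsub : {t ∈ Set.Icc (0:ℝ) a | ‖f s‖ < ‖f t‖}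
      ∪ {t ∈ Set.Icc (0:ℝ) a | t ≤ s ∧ ‖f t‖ = ‖f s‖}
      ⊆ {t ∈ Set.Icc (0:ℝ) a | rearr a f x < ‖f t‖} := by
    rintro t (ht | ht)
    · exact ⟨ht.1, hgt.trans ht.2⟩
    · exact ⟨ht.1, ht.2.2 ▸ hgt⟩
  have hdisj : Disjoint {t ∈ Set.Icc (0:ℝ) a | ‖f s‖ < ‖f t‖}
      {t ∈ Set.Icc (0:ℝ) a | t ≤ s ∧ ‖f t‖ = ‖f s‖} := by
    rw [Set.disjoint_left]
    rintro t ht ht'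
    exact absurd ht'.2.2 (ne_of_gt ht.2)
  have hmeas2 : MeasurableSet {t ∈ Set.Icc (0:ℝ) a | t ≤ s ∧ ‖f t‖ = ‖f s‖} :=
    measurableSet_Icc.inter ((measurableSet_le measurable_id measurable_const).inter
      (measurableSet_eq_fun hfm.norm measurable_const))
  have hadd := measure_union (μ := volume) hdisj hmeas2
  have hle2 : distrib a f ‖f s‖ + levelCDF a f s ≤ ENNReal.ofReal x := by
    rw [distrib, levelCDF, ← hadd]
    exact (measure_mono hsub).trans hd
  have h3 := ENNReal.toReal_mono ENNReal.ofReal_ne_top hle2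
  rw [ENNReal.toReal_add (distrib_ne_top a f _) levelCDF_ne_top,
    ENNReal.toReal_ofReal hx.le] at h3
  exact h3

/-- Claim 2: points of rank at most `x` have `‖f s‖ ≥ rearr a f x`. -/
lemma rearr_le_of_Rhat_le (hle : Rhat a f s ≤ x) : rearr a f x ≤ ‖f s‖ := by
  have h1 : (distrib a f ‖f s‖).toReal ≤ x :=
    le_trans (le_add_of_nonneg_right ENNReal.toReal_nonneg) hle
  have h2 : distrib a f ‖f s‖ ≤ ENNReal.ofReal x := by
    rw [← ENNReal.ofReal_toReal (distrib_ne_top a f ‖f s‖)]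
    exact ENNReal.ofReal_le_ofReal h1
  exact csInf_le ⟨0, fun y hy => hy.1⟩ ⟨norm_nonneg _, h2⟩

/-- The level-set CDF lemma (continuous distribution of mass within a level set). -/
lemma cdf_lemma {L : Set ℝ} (hL : MeasurableSet L) (hLsub : L ⊆ Set.Icc 0 a)
    {y : ℝ} (hy : 0 ≤ y) :
    volume {s ∈ L | (volume (L ∩ Set.Iic s)).toReal ≤ y}
      = min (ENNReal.ofReal y) (volume L) := by
  have hMfin : volume L ≠ ⊤ :=
    (lt_of_le_of_lt (measure_mono hLsub)
      (by rw [Real.volume_Icc]; exact ENNReal.ofReal_lt_top)).ne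
  set G : ℝ → ℝ := fun s => (volume (L ∩ Set.Iic s)).toReal with hG
  have hfin : ∀ s, volume (L ∩ Set.Iic s) ≠ ⊤ :=
    fun s => (lt_of_le_of_lt (measure_mono (Set.inter_subset_left)) hMfin.lt_top).ne
  have hGmono : Monotone G := fun s s' hss =>
    ENNReal.toReal_mono (hfin s') (measure_mono (Set.inter_subset_inter_right L (Set.Iic_subset_Iic.mpr hss)))
  have hGlip : ∀ s s' : ℝ, s ≤ s' → G s' ≤ G s + (s' - s) := by
    intro s s' hss
    have hsub : L ∩ Set.Iic s' ⊆ (L ∩ Set.Iic s) ∪ Set.Ioc s s' := by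
      rintro t ⟨htL, hts⟩
      rcases le_or_gt t s with h | h
      · exact Or.inl ⟨htL, h⟩
      · exact Or.inr ⟨h, hts⟩
    have h1 := (measure_mono (μ := volume) hsub).trans (measure_union_le _ _)
    have h2 := ENNReal.toReal_mono (by
      refine ENNReal.add_ne_top.mpr ⟨hfin s, ?_⟩
      rw [Real.volume_Ioc]; exact ENNReal.ofReal_ne_top) h1
    rw [ENNReal.toReal_add (hfin s) (by rw [Real.volume_Ioc]; exact ENNReal.ofReal_ne_top),
      Real.volume_Ioc, ENNReal.toReal_ofReal (by linarith)] at h2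
    exact h2
  have hGle : ∀ s, G s ≤ (volume L).toReal := fun s =>
    ENNReal.toReal_mono hMfin (measure_mono Set.inter_subset_left)
  rcases le_or_gt (volume L).toReal y with hcase | hcase
  · have hset : {s ∈ L | G s ≤ y} = L := by
      ext s
      exact ⟨fun h => h.1, fun h => ⟨h, (hGle s).trans hcase⟩⟩
    rw [hset, min_eq_right]
    rw [← ENNReal.ofReal_toReal hMfin]
    exact ENNReal.ofReal_le_ofReal hcase
  · set U := {s : ℝ | G s ≤ y} with hU
    have hUne : (-1 : ℝ) ∈ U := by
      have : L ∩ Set.Iic (-1 : ℝ) = ∅ := by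
        ext t
        simp only [Set.mem_inter_iff, Set.mem_Iic, Set.mem_empty_iff_false, iff_false]
        rintro ⟨htL, ht⟩
        linarith [(hLsub htL).1]
      simp only [hU, Set.mem_setOf_eq, hG, this, measure_empty]
      simpa using hy
    have hUbdd : BddAbove U := by
      refine ⟨a, fun s hs => ?_⟩
      by_contra hcon
      push_neg at hcon
      have : L ∩ Set.Iic s = L := by
        refine Set.inter_eq_left.mpr fun t ht => ?_
        exact le_trans (hLsub ht).2 hcon.le
      have : G s = (volume L).toReal := by rw [hG]; simp only [this]
      rw [hU, Set.mem_setOf_eq, this] at hs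
      linarith
    have hGcont : Continuous G := by
      have : LipschitzWith 1 G := by
        refine LipschitzWith.of_dist_le_mul fun s s' => ?_
        rw [NNReal.coe_one, one_mul, Real.dist_eq, Real.dist_eq]
        rcases le_total s s' with h | h
        · rw [abs_of_nonpos (by linarith [hGmono h] : G s - G s' ≤ 0),
            abs_of_nonpos (by linarith)]
          linarith [hGlip s s' h]
        · rw [abs_of_nonneg (by linarith [hGmono h] : 0 ≤ G s - G s'),
            abs_of_nonneg (by linarith)]
          linarith [hGlip s' s h]
      exact this.continuous
    have hUclosed : IsClosed U := isClosed_Iic.preimage hGcont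
    set c := sSup U with hc
    have hcU : c ∈ U := hUclosed.csSup_mem ⟨-1, hUne⟩ hUbdd
    have hUeq : U = Set.Iic c := by
      ext s
      constructor
      · exact fun hs => le_csSup hUbdd hs
      · intro hs
        exact le_trans (hGmono hs) hcU
    have hGc : G c = y := by
      refine le_antisymm hcU ?_
      by_contra hcon
      push_neg at hcon
      have hs' : c + (y - G c) ∈ U := by
        rw [hU, Set.mem_setOf_eq]
        have := hGlip c (c + (y - G c)) (by linarith)
        linarith
      have := le_csSup hUbdd hs'
      linarith
    have hset : {s ∈ L | G s ≤ y} = L ∩ Set.Iic c := by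
      ext s
      constructor
      · intro hs
        exact ⟨hs.1, hUeq ▸ hs.2⟩
      · rintro ⟨hsL, hsc⟩
        exact ⟨hsL, (hUeq ▸ hsc : s ∈ U)⟩
    rw [hset, min_eq_left]
    · rw [← hGc, hG]
      exact (ENNReal.ofReal_toReal (hfin c)).symm
    · rw [← ENNReal.ofReal_toReal hMfin]
      exact ENNReal.ofReal_le_ofReal hcase.le


lemma measurable_Gfun (L : Set ℝ) : Measurable fun s => (volume (L ∩ Set.Iic s)).toReal :=
  (Monotone.measurable fun s s' hss => measure_mono
    (Set.inter_subset_inter_right L (Set.Iic_subset_Iic.mpr hss))).ennreal_toReal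

/-- `dge` lower bound: the measure of `{‖f‖ ≥ rearr a f x}` is at least `x`. -/
lemma dge_ge (hfm : Measurable f) (ha : 0 < a) (hx : x ∈ Set.Ioc 0 a) :
    ENNReal.ofReal x ≤ dge a f (rearr a f x) := by
  rcases eq_or_lt_of_le (rearr_nonneg a f x) with h0 | h0
  · rw [dge]
    have : {t ∈ Set.Icc (0:ℝ) a | rearr a f x ≤ ‖f t‖} = Set.Icc 0 a := by
      ext t
      exact ⟨fun h => h.1, fun h => ⟨h, by rw [← h0]; exact norm_nonneg _⟩⟩
    rw [this, Real.volume_Icc, sub_zero]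
    exact ENNReal.ofReal_le_ofReal hx.2
  · set τb := rearr a f x with hτb
    set τseq : ℕ → ℝ := fun n => τb - τb/(n+2) with hτseq
    have hτn_lt : ∀ n, τseq n < τb := fun n =>
      sub_lt_self τb (by positivity)
    have hτn_nn : ∀ n, 0 ≤ τseq n := by
      intro n
      have h1 : τb/(n+2) ≤ τb := by
        rw [div_le_iff₀ (by positivity)]
        nlinarith
      simpa [hτseq] using sub_nonneg.mpr h1
    have hτn_mono : Monotone τseq := by
      intro n m hnm
      have : τb/((m:ℝ)+2) ≤ τb/((n:ℝ)+2) := by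
        apply div_le_div_of_nonneg_left h0.le (by positivity)
        have : (n:ℝ) ≤ (m:ℝ) := by exact_mod_cast hnm
        linarith
      simp only [hτseq]
      linarith
    have hanti : Antitone fun n : ℕ => {t ∈ Set.Icc (0:ℝ) a | τseq n < ‖f t‖} := by
      intro n m hnm t ht
      exact ⟨ht.1, lt_of_le_of_lt (hτn_mono hnm) ht.2⟩
    have hI : (⋂ n : ℕ, {t ∈ Set.Icc (0:ℝ) a | τseq n < ‖f t‖})
        = {t ∈ Set.Icc (0:ℝ) a | τb ≤ ‖f t‖} := by
      ext t
      simp only [Set.mem_iInter, Set.mem_sep_iff]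
      constructor
      · rintro h
        refine ⟨(h 0).1, ?_⟩
        by_contra hcon
        push_neg at hcon
        obtain ⟨n, hn⟩ := exists_nat_one_div_lt
          (div_pos (sub_pos.mpr hcon) h0)
        have h2 : τb/(n+2) < τb - ‖f t‖ := by
          have h3 : τb/((n:ℝ)+2) ≤ τb * (1/((n:ℝ)+1)) := by
            rw [mul_one_div]
            apply div_le_div_of_nonneg_left h0.le (by positivity) (by linarith)
          have h4 : τb * (1/((n:ℝ)+1)) < τb * ((τb - ‖f t‖)/τb) :=
            mul_lt_mul_of_pos_left hn h0
          rw [mul_div_cancel₀ _ h0.ne'] at h4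
          linarith
        have := (h n).2
        simp only [hτseq] at this
        linarith
      · rintro ⟨ht1, ht2⟩
        exact fun n => ⟨ht1, lt_of_lt_of_le (hτn_lt n) ht2⟩
    have htend := tendsto_measure_iInter_atTop (μ := volume)
      (fun n => (measurableSet_distrib hfm a (τseq n)).nullMeasurableSet) hanti
      ⟨0, sep_subset_Icc_vol_ne_top⟩
    rw [hI] at htend
    refine ge_of_tendsto htend (Filter.Eventually.of_forall fun n => ?_)
    have hnot : ¬ (0 ≤ τseq n ∧ distrib a f (τseq n) ≤ ENNReal.ofReal x) := by
      intro hcon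
      have := csInf_le (⟨0, fun y hy => hy.1⟩ :
        BddBelow {τ : ℝ | 0 ≤ τ ∧ distrib a f τ ≤ ENNReal.ofReal x}) hcon
      have h5 := hτn_lt n
      rw [hτb] at h5
      rw [rearr] at h5
      linarith
    push_neg at hnot
    exact (hnot (hτn_nn n)).le

/-- Core uniformity identity. -/
lemma Rhat_core (hfm : Measurable f) (ha : 0 < a) (hx : x ∈ Set.Ioc 0 a) :
    volume {s ∈ Set.Icc (0:ℝ) a | rearr a f x ≤ ‖f s‖ ∧ Rhat a f s ≤ x}
      = ENNReal.ofReal x := by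
  set τb := rearr a f x with hτb
  have hd : distrib a f τb ≤ ENNReal.ofReal x :=
    (rearr_le_iff hfm hx.1 (rearr_nonneg a f x)).mp le_rfl
  have hdt : (distrib a f τb).toReal ≤ x := by
    have := ENNReal.toReal_mono ENNReal.ofReal_ne_top hd
    rwa [ENNReal.toReal_ofReal hx.1.le] at this
  set L := {t ∈ Set.Icc (0:ℝ) a | ‖f t‖ = τb} with hLdef
  have hLmeas : MeasurableSet L :=
    measurableSet_Icc.inter (measurableSet_eq_fun hfm.norm measurable_const)
  set y := x - (distrib a f τb).toReal with hy
  have hy0 : 0 ≤ y := by rw [hy]; linarith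
  have hlevel : ∀ s ∈ L, levelCDF a f s = volume (L ∩ Set.Iic s) := by
    intro s hs
    rw [levelCDF]
    congr 1
    ext t
    simp only [hLdef, Set.mem_inter_iff, Set.mem_Iic, Set.mem_sep_iff]
    constructor
    · rintro ⟨ht1, ht2, ht3⟩
      exact ⟨⟨ht1, ht3.trans hs.2⟩, ht2⟩
    · rintro ⟨⟨ht1, ht3⟩, ht2⟩
      exact ⟨ht1, ht2, ht3.trans hs.2.symm⟩
  have hset : {s ∈ Set.Icc (0:ℝ) a | τb ≤ ‖f s‖ ∧ Rhat a f s ≤ x}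
      = {s ∈ Set.Icc (0:ℝ) a | τb < ‖f s‖}
        ∪ {s ∈ L | (volume (L ∩ Set.Iic s)).toReal ≤ y} := by
    ext s
    simp only [Set.mem_union, Set.mem_sep_iff]
    constructor
    · rintro ⟨hs1, hs2, hs3⟩
      rcases eq_or_lt_of_le hs2 with heq | hlt
      · have hsL : s ∈ L := ⟨hs1, heq.symm⟩
        refine Or.inr ⟨hsL, ?_⟩
        have hRe : Rhat a f s
            = (distrib a f τb).toReal + (volume (L ∩ Set.Iic s)).toReal := by
          rw [Rhat, hsL.2, hlevel s hsL]
        rw [hRe] at hs3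
        rw [hy]
        linarith
      · exact Or.inl ⟨hs1, hlt⟩
    · rintro (⟨hs1, hs2⟩ | ⟨hsL, hs2⟩)
      · exact ⟨hs1, hs2.le, Rhat_le_of_gt hfm hx.1 hs2⟩
      · refine ⟨hsL.1, hsL.2.ge, ?_⟩
        have hRe : Rhat a f s
            = (distrib a f τb).toReal + (volume (L ∩ Set.Iic s)).toReal := by
          rw [Rhat, hsL.2, hlevel s hsL]
        rw [hRe]
        rw [hy] at hs2
        linarith
  rw [hset]
  have hdisj : Disjoint {s ∈ Set.Icc (0:ℝ) a | τb < ‖f s‖}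
      {s ∈ L | (volume (L ∩ Set.Iic s)).toReal ≤ y} := by
    rw [Set.disjoint_left]
    rintro s hs1 hs2
    exact absurd hs2.1.2 (ne_of_gt hs1.2)
  have hmeas2 : MeasurableSet {s ∈ L | (volume (L ∩ Set.Iic s)).toReal ≤ y} :=
    hLmeas.inter ((measurable_Gfun L) measurableSet_Iic)
  rw [measure_union hdisj hmeas2]
  have hcdf := cdf_lemma (a := a) hLmeas (fun t ht => ht.1) hy0
  rw [hcdf]
  have hsplit : distrib a f τb + volume L = dge a f τb := by
    rw [distrib, dge, ← measure_union (by
      rw [Set.disjoint_left]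
      rintro t ht1 ht2
      exact absurd ht2.2 (ne_of_gt ht1.2)) hLmeas]
    congr 1
    ext t
    simp only [hLdef, Set.mem_union, Set.mem_sep_iff]
    constructor
    · rintro (⟨ht1, ht2⟩ | ⟨ht1, ht2⟩)
      · exact ⟨ht1, ht2.le⟩
      · exact ⟨ht1, ht2.ge⟩
    · rintro ⟨ht1, ht2⟩
      rcases eq_or_lt_of_le ht2 with heq | hlt
      · exact Or.inr ⟨ht1, heq.symm⟩
      · exact Or.inl ⟨ht1, hlt⟩
  have harith : distrib a f τb + min (ENNReal.ofReal y) (volume L)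
      = min (ENNReal.ofReal x) (dge a f τb) := by
    rw [← hsplit, ← min_add_add_left]
    congr 1
    have hd_eq : distrib a f τb = ENNReal.ofReal ((distrib a f τb).toReal) :=
      (ENNReal.ofReal_toReal (distrib_ne_top a f τb)).symm
    calc distrib a f τb + ENNReal.ofReal y
        = ENNReal.ofReal ((distrib a f τb).toReal) + ENNReal.ofReal y := by rw [← hd_eq]
      _ = ENNReal.ofReal ((distrib a f τb).toReal + y) :=
          (ENNReal.ofReal_add ENNReal.toReal_nonneg hy0).symm
      _ = ENNReal.ofReal x := by rw [hy]; congr 1; ring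
  have hdv : volume {s ∈ Set.Icc (0:ℝ) a | τb < ‖f s‖} = distrib a f τb := rfl
  rw [hdv, harith, min_eq_left (dge_ge hfm ha hx)]

/-- Uniform distribution of the rank. -/
lemma Rhat_uniform (hfm : Measurable f) (ha : 0 < a) (hx : x ∈ Set.Ioc 0 a) :
    volume {s ∈ Set.Icc (0:ℝ) a | Rhat a f s ≤ x} = ENNReal.ofReal x := by
  rw [← Rhat_core hfm ha hx]
  congr 1
  ext s
  simp only [Set.mem_sep_iff]
  exact ⟨fun h => ⟨h.1, rearr_le_of_Rhat_le h.2, h.2⟩, fun h => ⟨h.1, h.2.2⟩⟩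

/-- L2: lower bound inside a superlevel set of `f`. -/
lemma Rhat_superlevel (hfm : Measurable f) (ha : 0 < a) (hx : x ∈ Set.Ioc 0 a)
    (hτ : 0 ≤ τ) :
    min (ENNReal.ofReal x) (distrib a f τ)
      ≤ volume {s ∈ Set.Icc (0:ℝ) a | τ < ‖f s‖ ∧ Rhat a f s ≤ x} := by
  rcases le_or_gt (rearr a f x) τ with hcase | hcase
  · refine le_trans (min_le_right _ _) (measure_mono ?_)
    rintro s ⟨hs1, hs2⟩
    exact ⟨hs1, hs2, Rhat_le_of_gt hfm hx.1 (lt_of_le_of_lt hcase hs2)⟩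
  · refine le_trans (min_le_left _ _) ?_
    rw [← Rhat_core hfm ha hx]
    refine measure_mono ?_
    rintro s ⟨hs1, hs2, hs3⟩
    exact ⟨hs1, lt_of_lt_of_le hcase hs2, hs3⟩

/-- a.e. `0 < Rhat`. -/
lemma Rhat_pos_ae (hfm : Measurable f) (ha : 0 < a) :
    volume {s ∈ Set.Icc (0:ℝ) a | Rhat a f s ≤ 0} = 0 := by
  have hbound : ∀ n : ℕ, volume {s ∈ Set.Icc (0:ℝ) a | Rhat a f s ≤ 0}
      ≤ ENNReal.ofReal (a/(n+1)) := by
    intro n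
    have hx : a/((n:ℝ)+1) ∈ Set.Ioc 0 a := by
      constructor
      · positivity
      · rw [div_le_iff₀ (by positivity)]
        nlinarith
    rw [← Rhat_uniform hfm ha hx]
    refine measure_mono fun s hs => ⟨hs.1, hs.2.trans (by positivity)⟩
  have htend : Tendsto (fun n : ℕ => ENNReal.ofReal (a/(n+1))) atTop (𝓝 0) := by
    rw [show (0:ℝ≥0∞) = ENNReal.ofReal 0 from ENNReal.ofReal_zero.symm]
    refine (ENNReal.continuous_ofReal.tendsto 0).comp ?_
    have := tendsto_one_div_add_atTop_nhds_zero_nat.const_mul a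
    simpa [mul_one_div, div_eq_mul_inv] using this
  exact le_antisymm (ge_of_tendsto htend
    (Filter.Eventually.of_forall hbound)) zero_le

/-- a.e. `Rhat < a`. -/
lemma Rhat_lt_ae (hfm : Measurable f) (ha : 0 < a) :
    volume {s ∈ Set.Icc (0:ℝ) a | a ≤ Rhat a f s} = 0 := by
  have hbound : ∀ n : ℕ, volume {s ∈ Set.Icc (0:ℝ) a | a ≤ Rhat a f s}
      ≤ ENNReal.ofReal (a/(n+1)) := by
    intro n
    set x := a - a/(n+1) with hxdef
    have hx0 : 0 ≤ x := by
      rw [hxdef, sub_nonneg, div_le_iff₀ (by positivity)]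
      nlinarith
    have hdisj : Disjoint {s ∈ Set.Icc (0:ℝ) a | Rhat a f s ≤ x}
        {s ∈ Set.Icc (0:ℝ) a | a ≤ Rhat a f s} := by
      rw [Set.disjoint_left]
      rintro s hs1 hs2
      have hpos : 0 < a/((n:ℝ)+1) := by positivity
      have h1 := hs1.2
      have h2 := hs2.2
      rw [hxdef] at h1
      linarith
    have hmeasB : MeasurableSet {s ∈ Set.Icc (0:ℝ) a | a ≤ Rhat a f s} :=
      measurableSet_Icc.inter (measurableSet_le measurable_const (Rhat_measurable hfm ha.le))
    have hu := measure_union (μ := volume) hdisj hmeasB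
    have hsub : {s ∈ Set.Icc (0:ℝ) a | Rhat a f s ≤ x}
        ∪ {s ∈ Set.Icc (0:ℝ) a | a ≤ Rhat a f s} ⊆ Set.Icc 0 a := by
      rintro s (hs | hs)
      exacts [hs.1, hs.1]
    have hsum : volume {s ∈ Set.Icc (0:ℝ) a | Rhat a f s ≤ x}
        + volume {s ∈ Set.Icc (0:ℝ) a | a ≤ Rhat a f s} ≤ ENNReal.ofReal a := by
      rw [← hu]
      calc volume _ ≤ volume (Set.Icc (0:ℝ) a) := measure_mono hsub
        _ = ENNReal.ofReal a := by rw [Real.volume_Icc, sub_zero]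
    rcases eq_or_lt_of_le hx0 with hx0' | hx0'
    · -- x = 0, i.e. a = a/(n+1); then ofReal(a/(n+1)) = ofReal a and the bound is trivial
      refine le_trans (le_trans (le_add_self) hsum) ?_
      rw [show a/((n:ℝ)+1) = a - x from by rw [hxdef]; ring, ← hx0', sub_zero]
    · have hx : x ∈ Set.Ioc 0 a := ⟨hx0', by
        have hpos : a/((n:ℝ)+1) > 0 := by positivity
        rw [hxdef]; linarith⟩
      rw [Rhat_uniform hfm ha hx] at hsum
      have h1 := ENNReal.le_sub_of_add_le_left
        (show ENNReal.ofReal x ≠ ⊤ from ENNReal.ofReal_ne_top) hsum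
      rwa [← ENNReal.ofReal_sub a hx0,
        show a - x = a/(n+1) from by rw [hxdef]; ring] at h1
  have htend : Tendsto (fun n : ℕ => ENNReal.ofReal (a/(n+1))) atTop (𝓝 0) := by
    rw [show (0:ℝ≥0∞) = ENNReal.ofReal 0 from ENNReal.ofReal_zero.symm]
    refine (ENNReal.continuous_ofReal.tendsto 0).comp ?_
    have := tendsto_one_div_add_atTop_nhds_zero_nat.const_mul a
    simpa [mul_one_div, div_eq_mul_inv] using this
  exact le_antisymm (ge_of_tendsto htend
    (Filter.Eventually.of_forall hbound)) zero_le

end AuxD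
section AuxE
variable {φ : ℝ → ℝ} {a x σ τ : ℝ} {f u : ℝ → ℂ}

/-- measure bound: superlevel sets of the composed weight. -/
lemma weight_level_le (H : GoodPhi φ a) (hfm : Measurable f) (hσ : 0 < σ) :
    volume {s ∈ Set.Icc (0:ℝ) a | σ < etar φ a (Rhat a f s)} ≤ Lfun φ a σ := by
  have ha := GoodPhi_pos H
  obtain ⟨c, hc, hsub1, hsub2, hLc⟩ := Lfun_struct H σ
  have hsub : {s ∈ Set.Icc (0:ℝ) a | σ < etar φ a (Rhat a f s)}
      ⊆ {s ∈ Set.Icc (0:ℝ) a | Rhat a f s ≤ c} := by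
    rintro s ⟨hs1, hs2⟩
    refine ⟨hs1, ?_⟩
    have hmem : Rhat a f s ∈ Set.Ioo 0 a := by
      by_contra hcon
      rw [etar_of_not_mem hcon] at hs2
      linarith
    exact (hsub2 ⟨hmem, hs2⟩).2
  refine le_trans (measure_mono hsub) ?_
  rcases eq_or_lt_of_le hc.1 with hc0 | hc0
  · rw [hLc, ← hc0, ENNReal.ofReal_zero]
    exact le_of_eq (Rhat_pos_ae hfm ha)
  · rw [Rhat_uniform hfm ha ⟨hc0, hc.2⟩, hLc]

/-- Admissibility of the weight. -/
lemma weight_admissible (H : GoodPhi φ a) (hfm : Measurable f) {B : Set ℝ}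
    (hB : MeasurableSet B) (hBsub : B ⊆ Set.Icc 0 a) :
    ∫⁻ s in B, ENNReal.ofReal (etar φ a (Rhat a f s))
      ≤ ENNReal.ofReal (φ ((volume B).toReal)) := by
  have ha := GoodPhi_pos H
  have hBfin : volume B ≠ ⊤ :=
    (lt_of_le_of_lt (measure_mono hBsub)
      (by rw [Real.volume_Icc]; exact ENNReal.ofReal_lt_top)).ne
  set b := (volume B).toReal with hb
  have hbmem : b ∈ Set.Icc 0 a := by
    constructor
    · exact ENNReal.toReal_nonneg
    · have := ENNReal.toReal_mono ENNReal.ofReal_ne_top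
        ((measure_mono hBsub).trans_eq (by rw [Real.volume_Icc, sub_zero]))
      rwa [ENNReal.toReal_ofReal ha.le] at this
  have hofb : ENNReal.ofReal b = volume B := ENNReal.ofReal_toReal hBfin
  rw [lintegral_eq_lintegral_meas_lt _ (ae_of_all _ fun s => etar_nonneg φ a _)
    (((etar_meas H).comp (Rhat_measurable hfm ha.le)).aemeasurable)]
  have hbound : ∀ σ ∈ Set.Ioi (0:ℝ),
      (volume.restrict B) {s | σ < etar φ a (Rhat a f s)}
        ≤ volume {x ∈ Set.Ioo (0:ℝ) b | σ < etar φ a x} := by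
    intro σ hσ
    rw [Measure.restrict_apply' hB, Lfun_inter H hbmem, hofb]
    refine le_min (measure_mono Set.inter_subset_right) ?_
    refine le_trans (measure_mono ?_) (weight_level_le H hfm hσ)
    rintro s ⟨hs1, hs2⟩
    exact ⟨hBsub hs2, hs1⟩
  have hseteq : ∀ σ : ℝ, {x | σ < etar φ a x} ∩ Set.Ioo 0 b
      = {x ∈ Set.Ioo (0:ℝ) b | σ < etar φ a x} := fun σ => by
    ext x
    exact ⟨fun h => ⟨h.2, h.1⟩, fun h => ⟨h.2, h.1⟩⟩
  have hmeasR : Measurable fun σ : ℝ => volume {x ∈ Set.Ioo (0:ℝ) b | σ < etar φ a x} := by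
    refine Antitone.measurable fun σ σ' h => measure_mono ?_
    rintro x ⟨hx1, hx2⟩
    exact ⟨hx1, lt_of_le_of_lt h hx2⟩
  calc ∫⁻ σ in Set.Ioi (0:ℝ), (volume.restrict B) {s | σ < etar φ a (Rhat a f s)}
      ≤ ∫⁻ σ in Set.Ioi (0:ℝ), volume {x ∈ Set.Ioo (0:ℝ) b | σ < etar φ a x} :=
        setLIntegral_mono_ae hmeasR.aemeasurable (ae_of_all _ hbound)
    _ = ∫⁻ σ in Set.Ioi (0:ℝ), (volume.restrict (Set.Ioo 0 b)) {x | σ < etar φ a x} := by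
        refine setLIntegral_congr_fun measurableSet_Ioi (fun σ hσ => ?_)
        rw [Measure.restrict_apply' measurableSet_Ioo, hseteq σ]
    _ = ∫⁻ x in Set.Ioo (0:ℝ) b, ENNReal.ofReal (etar φ a x) :=
        (lintegral_eq_lintegral_meas_lt _ (ae_of_all _ fun s => etar_nonneg φ a _)
          ((etar_meas H).aemeasurable)).symm
    _ = ∫⁻ x in Set.Ioo (0:ℝ) b, eta φ a x := by
        refine setLIntegral_congr_fun measurableSet_Ioo (fun x hx => ?_)
        exact ofReal_etar H ⟨hx.1, hx.2.trans_le hbmem.2⟩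
    _ = ENNReal.ofReal (φ b) := eta_setIntegral H hbmem


/-- Attainment of the weight on superlevel sets of `f`. -/
lemma weight_attain (H : GoodPhi φ a) (hfm : Measurable f) (hτ : 0 < τ) :
    ENNReal.ofReal (φ ((distrib a f τ).toReal))
      ≤ ∫⁻ s in {s ∈ Set.Icc (0:ℝ) a | τ < ‖f s‖},
          ENNReal.ofReal (etar φ a (Rhat a f s)) := by
  have ha := GoodPhi_pos H
  set D := (distrib a f τ).toReal with hD
  have hDmem : D ∈ Set.Icc 0 a := ⟨ENNReal.toReal_nonneg, distrib_toReal_le ha.le⟩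
  have hofD : ENNReal.ofReal D = distrib a f τ :=
    ENNReal.ofReal_toReal (distrib_ne_top a f τ)
  have hAmeas : MeasurableSet {s ∈ Set.Icc (0:ℝ) a | τ < ‖f s‖} :=
    measurableSet_distrib hfm a τ
  rw [lintegral_eq_lintegral_meas_lt _ (ae_of_all _ fun s => etar_nonneg φ a _)
    (((etar_meas H).comp (Rhat_measurable hfm ha.le)).aemeasurable)]
  have hbound : ∀ σ ∈ Set.Ioi (0:ℝ),
      volume {x ∈ Set.Ioo (0:ℝ) D | σ < etar φ a x}
        ≤ (volume.restrict {s ∈ Set.Icc (0:ℝ) a | τ < ‖f s‖})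
            {s | σ < etar φ a (Rhat a f s)} := by
    intro σ hσ
    rw [Measure.restrict_apply' hAmeas, Lfun_inter H hDmem, hofD]
    obtain ⟨c, hc, hsub1, hsub2, hLc⟩ := Lfun_struct H σ
    rw [hLc]
    have hxbound : ∀ x', x' ∈ Set.Ioo (0:ℝ) a → σ < etar φ a x' →
        min (ENNReal.ofReal x') (distrib a f τ)
          ≤ volume ({s | σ < etar φ a (Rhat a f s)}
              ∩ {s ∈ Set.Icc (0:ℝ) a | τ < ‖f s‖}) := by
      intro x' hx' hσx'
      refine le_trans (Rhat_superlevel hfm ha ⟨hx'.1, hx'.2.le⟩ hτ.le) ?_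
      rw [← measure_diff_null (Rhat_pos_ae hfm ha)]
      refine measure_mono ?_
      rintro s ⟨⟨hs1, hs2, hs3⟩, hs4⟩
      have hpos : 0 < Rhat a f s := by
        by_contra hcon
        push_neg at hcon
        exact hs4 ⟨hs1, hcon⟩
      have hmem : Rhat a f s ∈ Set.Ioo 0 a := ⟨hpos, lt_of_le_of_lt hs3 hx'.2⟩
      have hη : σ < etar φ a (Rhat a f s) :=
        lt_of_lt_of_le hσx' (etar_anti H hmem hx' hs3)
      exact ⟨hη, hs1, hs2⟩
    rcases eq_or_lt_of_le hc.1 with hc0 | hc0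
    · rw [← hc0, ENNReal.ofReal_zero]
      simp
    · have hcseq_pos : ∀ n : ℕ, 0 < c - c/(n+2) := by
        intro n
        have h1 : c/((n:ℝ)+2) < c := by
          rw [div_lt_iff₀ (by positivity)]
          nlinarith
        linarith
      have hcseq_lt : ∀ n : ℕ, c - c/(n+2) < c := fun n =>
        sub_lt_self c (by positivity)
      have hterm : ∀ n : ℕ, min (ENNReal.ofReal (c - c/(n+2))) (distrib a f τ)
          ≤ volume ({s | σ < etar φ a (Rhat a f s)}
              ∩ {s ∈ Set.Icc (0:ℝ) a | τ < ‖f s‖}) := by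
        intro n
        have hmem : c - c/((n:ℝ)+2) ∈ Set.Ioo (0:ℝ) a :=
          ⟨hcseq_pos n, lt_of_lt_of_le (hcseq_lt n) hc.2⟩
        exact hxbound _ hmem (hsub1 ⟨hcseq_pos n, hcseq_lt n⟩).2
      have hreal : Tendsto (fun n : ℕ => c - c/(n+2)) atTop (𝓝 c) := by
        have h0 : Tendsto (fun n : ℕ => c/((n:ℝ)+2)) atTop (𝓝 0) := by
          refine tendsto_of_tendsto_of_tendsto_of_le_of_le
            (tendsto_const_nhds (x := (0:ℝ)))
            (by simpa [mul_one_div] using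
              tendsto_one_div_add_atTop_nhds_zero_nat.const_mul c) ?_ ?_
          · intro n; positivity
          · intro n
            apply div_le_div_of_nonneg_left hc0.le (by positivity)
            linarith
        have := (tendsto_const_nhds (x := c) (f := atTop (α := ℕ))).sub h0
        simpa using this
      have htend : Tendsto (fun n : ℕ => min (ENNReal.ofReal (c - c/(n+2)))
          (distrib a f τ)) atTop (𝓝 (min (ENNReal.ofReal c) (distrib a f τ))) :=
        Tendsto.min ((ENNReal.continuous_ofReal.tendsto c).comp hreal) tendsto_const_nhds
      have hfin := le_of_tendsto htend (Filter.Eventually.of_forall hterm)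
      rw [min_comm]
      exact hfin
  have hseteq : ∀ σ : ℝ, {x | σ < etar φ a x} ∩ Set.Ioo 0 D
      = {x ∈ Set.Ioo (0:ℝ) D | σ < etar φ a x} := fun σ => by
    ext x
    exact ⟨fun h => ⟨h.2, h.1⟩, fun h => ⟨h.2, h.1⟩⟩
  have hmeasL : Measurable fun σ : ℝ =>
      volume {x ∈ Set.Ioo (0:ℝ) D | σ < etar φ a x} := by
    refine Antitone.measurable fun σ σ' h => measure_mono ?_
    rintro x ⟨hx1, hx2⟩
    exact ⟨hx1, lt_of_le_of_lt h hx2⟩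
  calc ENNReal.ofReal (φ ((distrib a f τ).toReal))
      = ∫⁻ x in Set.Ioo (0:ℝ) D, eta φ a x := (eta_setIntegral H hDmem).symm
    _ = ∫⁻ x in Set.Ioo (0:ℝ) D, ENNReal.ofReal (etar φ a x) := by
        refine setLIntegral_congr_fun measurableSet_Ioo (fun x hx => ?_)
        exact (ofReal_etar H ⟨hx.1, hx.2.trans_le hDmem.2⟩).symm
    _ = ∫⁻ σ in Set.Ioi (0:ℝ), (volume.restrict (Set.Ioo 0 D)) {x | σ < etar φ a x} :=
        lintegral_eq_lintegral_meas_lt _ (ae_of_all _ fun s => etar_nonneg φ a _)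
          ((etar_meas H).aemeasurable)
    _ = ∫⁻ σ in Set.Ioi (0:ℝ), volume {x ∈ Set.Ioo (0:ℝ) D | σ < etar φ a x} := by
        refine setLIntegral_congr_fun measurableSet_Ioi (fun σ hσ => ?_)
        rw [Measure.restrict_apply' measurableSet_Ioo, hseteq σ]
    _ ≤ ∫⁻ σ in Set.Ioi (0:ℝ), (volume.restrict {s ∈ Set.Icc (0:ℝ) a | τ < ‖f s‖})
          {s | σ < etar φ a (Rhat a f s)} :=
        setLIntegral_mono_ae (by
          refine (Antitone.measurable fun σ σ' h => measure_mono ?_).aemeasurable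
          intro s hs
          exact lt_of_le_of_lt h hs) (ae_of_all _ hbound)

/-- Tonelli for the pairing against a weight. -/
lemma pairing_eq (hu : Measurable u) {W : ℝ → ℝ≥0∞} (hW : Measurable W) :
    ∫⁻ s in Set.Icc (0:ℝ) a, ENNReal.ofReal ‖u s‖ * W s
      = ∫⁻ τ in Set.Ioi (0:ℝ), ∫⁻ s in {s ∈ Set.Icc (0:ℝ) a | τ < ‖u s‖}, W s := by
  have hFmeas : Measurable fun p : ℝ × ℝ =>
      ({p : ℝ × ℝ | p.2 < ‖u p.1‖}.indicator (fun p => W p.1)) p :=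
    (hW.comp measurable_fst).indicator
      (measurableSet_lt measurable_snd (hu.norm.comp measurable_fst))
  have key : ∀ s : ℝ, ENNReal.ofReal ‖u s‖ * W s
      = ∫⁻ τ in Set.Ioi (0:ℝ),
          ({p : ℝ × ℝ | p.2 < ‖u p.1‖}.indicator (fun p => W p.1)) (s, τ) := by
    intro s
    have h1 : ∀ τ : ℝ, ({p : ℝ × ℝ | p.2 < ‖u p.1‖}.indicator (fun p => W p.1)) (s, τ)
        = (Set.Iio ‖u s‖).indicator (fun _ => W s) τ := by
      intro τ
      simp only [Set.indicator, Set.mem_setOf_eq, Set.mem_Iio]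
    simp only [h1]
    rw [lintegral_indicator measurableSet_Iio, Measure.restrict_restrict measurableSet_Iio,
      setLIntegral_const, Set.Iio_inter_Ioi, Real.volume_Ioo, sub_zero, mul_comm]
  calc ∫⁻ s in Set.Icc (0:ℝ) a, ENNReal.ofReal ‖u s‖ * W s
      = ∫⁻ s in Set.Icc (0:ℝ) a, ∫⁻ τ in Set.Ioi (0:ℝ),
          ({p : ℝ × ℝ | p.2 < ‖u p.1‖}.indicator (fun p => W p.1)) (s, τ) :=
        lintegral_congr key
    _ = ∫⁻ τ in Set.Ioi (0:ℝ), ∫⁻ s in Set.Icc (0:ℝ) a,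
          ({p : ℝ × ℝ | p.2 < ‖u p.1‖}.indicator (fun p => W p.1)) (s, τ) :=
        lintegral_lintegral_swap hFmeas.aemeasurable
    _ = ∫⁻ τ in Set.Ioi (0:ℝ), ∫⁻ s in {s ∈ Set.Icc (0:ℝ) a | τ < ‖u s‖}, W s := by
        refine setLIntegral_congr_fun measurableSet_Ioi (fun τ hτ => ?_)
        have h2 : ∀ s : ℝ, ({p : ℝ × ℝ | p.2 < ‖u p.1‖}.indicator (fun p => W p.1)) (s, τ)
            = ({s : ℝ | τ < ‖u s‖}.indicator W) s := by
          intro s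
          simp only [Set.indicator, Set.mem_setOf_eq]
        simp only [h2]
        rw [lintegral_indicator (measurableSet_lt measurable_const hu.norm),
          Measure.restrict_restrict (measurableSet_lt measurable_const hu.norm)]
        congr 1
        rw [Set.inter_comm]
        rfl


lemma complex_factor {x y : ℂ} (hx : x ≠ 0) (heq : ‖x + y‖ + ‖x - y‖ ≤ 2 * ‖x‖) :
    ∃ c : ℝ, |c| ≤ 1 ∧ y = (c : ℂ) * x := by
  have hpq : (x + y) + (x - y) = 2 * x := by ring
  have h2 : ‖(x + y) + (x - y)‖ = 2 * ‖x‖ := by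
    rw [hpq, norm_mul]
    norm_num
  have h4 : ‖(x + y) + (x - y)‖ = ‖x + y‖ + ‖x - y‖ :=
    le_antisymm (norm_add_le _ _) (by rw [h2]; exact heq)
  have hray : SameRay ℝ (x + y) (x - y) := sameRay_iff_norm_add.mpr h4
  rcases eq_or_ne (x + y) 0 with hp0 | hp0
  · refine ⟨-1, by norm_num, ?_⟩
    have hyx : y = -x := by linear_combination hp0
    rw [hyx]
    push_cast
    ring
  · obtain ⟨r, hr0, hrq⟩ := hray.exists_nonneg_left hp0
    have hr1 : (0:ℝ) < 1 + r := by linarith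
    refine ⟨(1 - r)/(1 + r), ?_, ?_⟩
    · rw [abs_div, abs_of_pos hr1, div_le_one hr1]
      rcases abs_cases (1 - r) with ⟨h, _⟩ | ⟨h, _⟩ <;> linarith
    · have hc : (r : ℂ) * (x + y) = x - y := by
        rw [← Complex.real_smul]
        exact hrq
      have hr1' : ((1:ℂ) + (r:ℂ)) ≠ 0 := by
        have : ((1 + r : ℝ) : ℂ) ≠ 0 := Complex.ofReal_ne_zero.mpr hr1.ne'
        push_cast at this
        exact this
      have hlin : ((1:ℂ) + (r:ℂ)) * y = ((1:ℂ) - (r:ℂ)) * x := by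
        linear_combination hc
      push_cast
      rw [div_mul_eq_mul_div, eq_div_iff hr1']
      linear_combination hlin


theorem main_core (a : ℝ) (φ : ℝ → ℝ) (H : GoodPhi φ a)
    (f g : ℝ → ℂ) (hfm : Measurable f) (hgm : Measurable g)
    (hf1 : Nfun φ a f = 1)
    (hf0 : volume {t ∈ Set.Icc (0:ℝ) a | f t = 0} = 0)
    (hplus : Nfun φ a (f + g) ≤ 1)
    (hminus : Nfun φ a (f - g) ≤ 1) :
    ∃ h : ℝ → ℝ, Measurable h ∧
      (∀ᵐ t ∂(volume.restrict (Set.Icc (0:ℝ) a)), |h t| ≤ 1) ∧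
      (∀ᵐ t ∂(volume.restrict (Set.Icc (0:ℝ) a)), g t = (h t : ℂ) * f t) := by
  have ha := GoodPhi_pos H
  set W : ℝ → ℝ≥0∞ := fun s => ENNReal.ofReal (etar φ a (Rhat a f s)) with hWdef
  have hWmeas : Measurable W :=
    ((etar_meas H).comp (Rhat_measurable hfm ha.le)).ennreal_ofReal
  have hAdm : ∀ u : ℝ → ℂ, Measurable u →
      ∫⁻ s in Set.Icc (0:ℝ) a, ENNReal.ofReal ‖u s‖ * W s ≤ Nfun φ a u := by
    intro u hu
    rw [pairing_eq hu hWmeas]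
    exact lintegral_mono fun τ =>
      weight_admissible H hfm (measurableSet_distrib hu a τ) (fun s hs => hs.1)
  have hAtt : Nfun φ a f ≤ ∫⁻ s in Set.Icc (0:ℝ) a, ENNReal.ofReal ‖f s‖ * W s := by
    rw [pairing_eq hfm hWmeas]
    refine setLIntegral_mono_ae ?_ (ae_of_all _ fun τ hτ => weight_attain H hfm hτ)
    refine (Antitone.measurable fun τ τ' (h : τ ≤ τ') => ?_).aemeasurable
    refine lintegral_mono' (Measure.restrict_mono ?_ le_rfl) le_rfl
    rintro s ⟨hs1, hs2⟩
    exact ⟨hs1, lt_of_le_of_lt h hs2⟩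
  set u := f + g with hu
  set v := f - g with hv
  have hum : Measurable u := hfm.add hgm
  have hvm : Measurable v := hfm.sub hgm
  have hPu : ∫⁻ s in Set.Icc (0:ℝ) a, ENNReal.ofReal ‖u s‖ * W s ≤ 1 :=
    (hAdm u hum).trans hplus
  have hPv : ∫⁻ s in Set.Icc (0:ℝ) a, ENNReal.ofReal ‖v s‖ * W s ≤ 1 :=
    (hAdm v hvm).trans hminus
  have hPf : 1 ≤ ∫⁻ s in Set.Icc (0:ℝ) a, ENNReal.ofReal ‖f s‖ * W s := hf1 ▸ hAtt
  set gap : ℝ → ℝ := fun s => ‖u s‖ + ‖v s‖ - 2 * ‖f s‖ with hgapdef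
  have hgap0 : ∀ s, 0 ≤ gap s := by
    intro s
    have hsum : u s + v s = 2 * f s := by
      simp only [hu, hv, Pi.add_apply, Pi.sub_apply]
      ring
    have h1 : ‖u s + v s‖ ≤ ‖u s‖ + ‖v s‖ := norm_add_le _ _
    rw [hsum, norm_mul] at h1
    simp only [hgapdef]
    have h2 : ‖(2:ℂ)‖ = 2 := by norm_num
    rw [h2] at h1
    linarith
  have hgapmeas : Measurable gap :=
    ((hum.norm.add hvm.norm).sub (hfm.norm.const_mul 2))
  have hsplit : ∀ s, ENNReal.ofReal ‖u s‖ * W s + ENNReal.ofReal ‖v s‖ * W s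
      = (2 * (ENNReal.ofReal ‖f s‖ * W s)) + ENNReal.ofReal (gap s) * W s := by
    intro s
    rw [← add_mul, ← ENNReal.ofReal_add (norm_nonneg _) (norm_nonneg _)]
    have harg : ‖u s‖ + ‖v s‖ = 2 * ‖f s‖ + gap s := by
      simp only [hgapdef]; ring
    rw [harg, ENNReal.ofReal_add (by positivity) (hgap0 s), add_mul,
      ENNReal.ofReal_mul (by norm_num : (0:ℝ) ≤ 2), ENNReal.ofReal_ofNat, mul_assoc]
  have htotal : (2 : ℝ≥0∞) * (∫⁻ s in Set.Icc (0:ℝ) a, ENNReal.ofReal ‖f s‖ * W s)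
      + ∫⁻ s in Set.Icc (0:ℝ) a, ENNReal.ofReal (gap s) * W s ≤ 2 := by
    have h1 := lintegral_add_left (μ := volume.restrict (Set.Icc (0:ℝ) a))
      (hum.norm.ennreal_ofReal.mul hWmeas) (fun s => ENNReal.ofReal ‖v s‖ * W s)
    have h2 := lintegral_add_left (μ := volume.restrict (Set.Icc (0:ℝ) a))
      ((hfm.norm.ennreal_ofReal.mul hWmeas).const_mul 2)
      (fun s => ENNReal.ofReal (gap s) * W s)
    have h3 := lintegral_const_mul (μ := volume.restrict (Set.Icc (0:ℝ) a)) 2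
      (hfm.norm.ennreal_ofReal.mul hWmeas)
    calc 2 * (∫⁻ s in Set.Icc (0:ℝ) a, ENNReal.ofReal ‖f s‖ * W s)
          + ∫⁻ s in Set.Icc (0:ℝ) a, ENNReal.ofReal (gap s) * W s
        = ∫⁻ s in Set.Icc (0:ℝ) a,
            (2 * (ENNReal.ofReal ‖f s‖ * W s) + ENNReal.ofReal (gap s) * W s) := by
          exact (h2.trans (congrArg (· + _) h3)).symm
      _ = ∫⁻ s in Set.Icc (0:ℝ) a,
            (ENNReal.ofReal ‖u s‖ * W s + ENNReal.ofReal ‖v s‖ * W s) :=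
          lintegral_congr fun s => (hsplit s).symm
      _ = (∫⁻ s in Set.Icc (0:ℝ) a, ENNReal.ofReal ‖u s‖ * W s)
          + ∫⁻ s in Set.Icc (0:ℝ) a, ENNReal.ofReal ‖v s‖ * W s := h1
      _ ≤ 1 + 1 := add_le_add hPu hPv
      _ = 2 := by norm_num
  have hPG : ∫⁻ s in Set.Icc (0:ℝ) a, ENNReal.ofReal (gap s) * W s = 0 := by
    by_contra hne
    have h2 : (2:ℝ≥0∞) + ∫⁻ s in Set.Icc (0:ℝ) a, ENNReal.ofReal (gap s) * W s ≤ 2 := by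
      refine le_trans (add_le_add_left ?_ _) htotal
      calc (2:ℝ≥0∞) = 2 * 1 := by norm_num
        _ ≤ 2 * _ := mul_le_mul_right hPf 2
    exact absurd h2 (not_le.mpr (ENNReal.lt_add_right (by norm_num) hne))
  have haegap : ∀ᵐ s ∂(volume.restrict (Set.Icc (0:ℝ) a)),
      ENNReal.ofReal (gap s) * W s = 0 :=
    (lintegral_eq_zero_iff (hgapmeas.ennreal_ofReal.mul hWmeas)).mp hPG
  have haeW : ∀ᵐ s ∂(volume.restrict (Set.Icc (0:ℝ) a)), 0 < W s := by
    rw [ae_iff, Measure.restrict_apply' measurableSet_Icc]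
    refine measure_mono_null ?_ (measure_union_null (Rhat_pos_ae hfm ha) (Rhat_lt_ae hfm ha))
    rintro s ⟨hs1, hs2⟩
    simp only [hWdef, not_lt, le_zero_iff, ENNReal.ofReal_eq_zero, Set.mem_setOf_eq] at hs1
    have hnot : Rhat a f s ∉ Set.Ioo 0 a := by
      intro hmem
      exact absurd hs1 (not_le.mpr (etar_pos H hmem))
    rw [Set.mem_Ioo, not_and_or, not_lt, not_lt] at hnot
    rcases hnot with hle | hge
    · exact Or.inl ⟨hs2, hle⟩
    · exact Or.inr ⟨hs2, hge⟩
  have haef : ∀ᵐ s ∂(volume.restrict (Set.Icc (0:ℝ) a)), f s ≠ 0 := by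
    rw [ae_iff, Measure.restrict_apply' measurableSet_Icc]
    refine measure_mono_null ?_ hf0
    rintro s ⟨hs1, hs2⟩
    simp only [Set.mem_setOf_eq, not_not] at hs1
    exact ⟨hs2, hs1⟩
  set h : ℝ → ℝ := fun t =>
    ((g t).re * (f t).re + (g t).im * (f t).im)
      / ((f t).re * (f t).re + (f t).im * (f t).im) with hhdef
  have hhmeas : Measurable h := by
    apply Measurable.div
    · exact ((hgm.re.mul hfm.re).add (hgm.im.mul hfm.im))
    · exact ((hfm.re.mul hfm.re).add (hfm.im.mul hfm.im))
  have hkey : ∀ᵐ t ∂(volume.restrict (Set.Icc (0:ℝ) a)),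
      |h t| ≤ 1 ∧ g t = (h t : ℂ) * f t := by
    filter_upwards [haegap, haeW, haef] with t h1 h2 h3
    have hW0 : W t ≠ 0 := h2.ne'
    have hgap0' : ENNReal.ofReal (gap t) = 0 := by
      rcases mul_eq_zero.mp h1 with hc | hc
      · exact hc
      · exact absurd hc hW0
    have hgapt : gap t = 0 :=
      le_antisymm (ENNReal.ofReal_eq_zero.mp hgap0') (hgap0 t)
    have heq : ‖f t + g t‖ + ‖f t - g t‖ ≤ 2 * ‖f t‖ := by
      have := hgapt
      simp only [hgapdef, hu, hv, Pi.add_apply, Pi.sub_apply] at this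
      linarith
    obtain ⟨c, hc1, hc2⟩ := complex_factor h3 heq
    have hD : 0 < (f t).re * (f t).re + (f t).im * (f t).im := by
      have := Complex.normSq_pos.mpr h3
      rwa [Complex.normSq_apply] at this
    have hht : h t = c := by
      simp only [hhdef]
      rw [hc2]
      have hre : ((c:ℂ) * f t).re = c * (f t).re := by
        simp [Complex.mul_re]
      have him : ((c:ℂ) * f t).im = c * (f t).im := by
        simp [Complex.mul_im]
      rw [hre, him]
      rw [mul_assoc, mul_assoc, ← mul_add, mul_div_assoc, div_self hD.ne', mul_one]
    constructor
    · rw [hht]; exact hc1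
    · rw [hht, hc2]
  exact ⟨h, hhmeas, hkey.mono fun t ht => ht.1, hkey.mono fun t ht => ht.2⟩

end AuxE

/-- Let `φ` be strictly increasing, concave, continuous on `[0,a]` with
`φ 0 = 0`, `φ a = 1`.  If `f, g ∈ Λ(φ)[0,a]`, `‖f‖ = 1`, `f ≠ 0` a.e., and
`‖f ± g‖ ≤ 1`, then `g = h·f` for some real-valued `h` with `|h| ≤ 1` a.e. -/
theorem factor_through_real_multiplier (a : ℝ) (ha : 0 < a) (φ : ℝ → ℝ)
    (hconc : ConcaveOn ℝ (Set.Icc 0 a) φ)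
    (hcont : ContinuousOn φ (Set.Icc 0 a))
    (hmono : StrictMonoOn φ (Set.Icc 0 a))
    (hφ0 : φ 0 = 0) (hφa : φ a = 1)
    (f g : ℝ → ℂ) (hfm : Measurable f) (hgm : Measurable g)
    (hgmem : eLorentzNorm φ a g < ⊤)
    (hf1 : eLorentzNorm φ a f = 1)
    (hf0 : volume {t ∈ Set.Icc (0:ℝ) a | f t = 0} = 0)
    (hplus : eLorentzNorm φ a (f + g) ≤ 1)
    (hminus : eLorentzNorm φ a (f - g) ≤ 1) :
    ∃ h : ℝ → ℝ, Measurable h ∧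
      (∀ᵐ t ∂(volume.restrict (Set.Icc (0:ℝ) a)), |h t| ≤ 1) ∧
      (∀ᵐ t ∂(volume.restrict (Set.Icc (0:ℝ) a)), g t = (h t : ℂ) * f t) := by
  have hcond : 0 ≤ a ∧ MonotoneOn φ (Set.Icc 0 a) ∧ ContinuousOn φ (Set.Icc 0 a) :=
    ⟨ha.le, hmono.monotoneOn, hcont⟩
  have H : GoodPhi φ a := ⟨ha, hconc, hcont, hmono, hφ0, hφa⟩
  have hfN : Nfun φ a f = 1 := by
    rw [← eLorentz_eq_Nfun hcond hfm ha hφ0]; exact hf1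
  have hplusN : Nfun φ a (f + g) ≤ 1 := by
    rw [← eLorentz_eq_Nfun hcond (show Measurable (f + g) from hfm.add hgm) ha hφ0]; exact hplus
  have hminusN : Nfun φ a (f - g) ≤ 1 := by
    rw [← eLorentz_eq_Nfun hcond (show Measurable (f - g) from hfm.sub hgm) ha hφ0]; exact hminus
  exact main_core a φ H f g hfm hgm hfN hf0 hplusN hminusN

end
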